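/- arXiv:1609.05579 — 3 statements merged into one kernel-verified Lean document; each statement's English description precedes it below -/
import Mathlib

section
/- Let X be a δ-hyperbolic geodesic metric space, let f ∈ Isom(X) be a hyperbolic isometry with attracting and repelling fixed points A_+ and A_- in ∂X, fix disjoint neighborhoods U_+ and U_- of A_+ and A_- in X̄, and fix x ∈ X ∩ U_+. For g ∈ Isom(X) and m ≥ 0 let α_m be a geodesic from x to f^m g x. Then there exist ε ≥ 0 and M_1 ≥ 0, depending only on δ, f, x, U_+ and U_-, such that for every g ∈ Isom(X) with g U_+ ∩ U_- = ∅ and every m ≥ M_1, the concatenation α_m · (f^m g α_m), a path from x to (f^m g)^2 x, is a (1,ε)-quasi-geodesic. -/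
open Filter Metric Set

noncomputable section

universe u

variable {X : Type u} [MetricSpace X]

/-- The Gromov product `(x·y)_w = ½(d(x,w) + d(w,y) − d(x,y))`. -/
def gromovProduct (w x y : X) : ℝ := (dist x w + dist w y - dist x y) / 2

/-- `γ` is a geodesic from `x` to `y`, parametrized by arc length on `[0, dist x y]`. -/
structure IsGeodesicSegment (γ : ℝ → X) (x y : X) : Prop where
  source : γ 0 = x
  target : γ (dist x y) = y
  isom : ∀ ⦃s t : ℝ⦄, s ∈ Set.Icc (0 : ℝ) (dist x y) → t ∈ Set.Icc (0 : ℝ) (dist x y) →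
    dist (γ s) (γ t) = |s - t|

/-- A geodesic metric space is `δ`-hyperbolic: every pair of points is joined by a
geodesic, every geodesic triangle is `δ`-slim, every geodesic triangle has insize at
most `δ`, and the Gromov product is `δ`-hyperbolic. -/
structure IsDeltaHyperbolic (X : Type u) [MetricSpace X] (δ : ℝ) : Prop where
  delta_nonneg : 0 ≤ δ
  geodesic : ∀ x y : X, ∃ γ : ℝ → X, IsGeodesicSegment γ x y
  slim : ∀ (x y z : X) (α β γ : ℝ → X),
    IsGeodesicSegment α y z → IsGeodesicSegment β z x → IsGeodesicSegment γ x y →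
    ∀ s ∈ Set.Icc (0 : ℝ) (dist y z),
      (∃ t ∈ Set.Icc (0 : ℝ) (dist z x), dist (α s) (β t) ≤ δ) ∨
      (∃ t ∈ Set.Icc (0 : ℝ) (dist x y), dist (α s) (γ t) ≤ δ)
  insize : ∀ (x y z : X) (α β γ : ℝ → X),
    IsGeodesicSegment α y z → IsGeodesicSegment β z x → IsGeodesicSegment γ x y →
    dist (α (gromovProduct y x z)) (β (gromovProduct z x y)) ≤ δ ∧
    dist (β (gromovProduct z x y)) (γ (gromovProduct x y z)) ≤ δ ∧
    dist (γ (gromovProduct x y z)) (α (gromovProduct y x z)) ≤ δ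
  gromov : ∀ w x y z : X,
    min (gromovProduct w x y) (gromovProduct w y z) - δ ≤ gromovProduct w x z

/-- An isometry `f` of `X` is hyperbolic if for every `x ∈ X` there is `t > 0` with
`t|m − n| ≤ d(f^m x, f^n x)` for all integers `m, n`. -/
def IsHyperbolicIsometry (f : X ≃ᵢ X) : Prop :=
  ∀ x : X, ∃ t : ℝ, 0 < t ∧
    ∀ m n : ℤ, t * |(m : ℝ) - (n : ℝ)| ≤ dist ((f ^ m) x) ((f ^ n) x)

/-- A sequence converges to infinity if the Gromov products `(x_i·x_j)_w → ∞`. -/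
def ConvergesToInfinity (w : X) (u : ℕ → X) : Prop :=
  Tendsto (fun p : ℕ × ℕ => gromovProduct w (u p.1) (u p.2)) atTop atTop

/-- Two sequences are equivalent if the mixed Gromov products tend to infinity. -/
def SeqEquiv (w : X) (u v : ℕ → X) : Prop :=
  Tendsto (fun p : ℕ × ℕ => gromovProduct w (u p.1) (v p.2)) atTop atTop

/-- Sequences converging to infinity. -/
def BoundarySeq (w : X) : Type u := {u : ℕ → X // ConvergesToInfinity w u}

/-- The Gromov boundary `∂X`: equivalence classes of sequences converging to infinity. -/
def GromovBoundary (w : X) : Type u :=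
  Quot (fun u v : BoundarySeq w => SeqEquiv w u.1 v.1)

/-- The boundary point determined by a sequence converging to infinity. -/
def boundaryPt (w : X) (u : BoundarySeq w) : GromovBoundary w := Quot.mk _ u

/-- `X̄ = X ∪ ∂X`. -/
def GromovClosure (w : X) : Type u := X ⊕ GromovBoundary w

theorem gromovProduct_basepoint_ge (w w' x y : X) :
    gromovProduct w x y - dist w w' ≤ gromovProduct w' x y := by
  have h1 : |dist w' x - dist w x| ≤ dist w' w := abs_dist_sub_le w' w x
  have h2 : |dist w' y - dist w y| ≤ dist w' w := abs_dist_sub_le w' w y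
  rw [abs_le] at h1 h2
  unfold gromovProduct
  rw [dist_comm x w', dist_comm x w, dist_comm w w']
  linarith [h1.1, h1.2, h2.1, h2.2]

theorem gromovProduct_isometry (f : X ≃ᵢ X) (w x y : X) :
    gromovProduct w (f x) (f y) = gromovProduct (f.symm w) x y := by
  unfold gromovProduct
  conv_lhs => rw [show w = f (f.symm w) from (f.apply_symm_apply w).symm]
  rw [f.dist_eq, f.dist_eq, f.dist_eq]

theorem convergesToInfinity_isometry {w : X} (f : X ≃ᵢ X) {u : ℕ → X}
    (h : ConvergesToInfinity w u) :
    ConvergesToInfinity w (fun n => f (u n)) := by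
  refine tendsto_atTop_mono (fun p => ?_)
    (tendsto_atTop_add_const_right atTop (-dist w (f.symm w)) h)
  have h1 := gromovProduct_basepoint_ge w (f.symm w) (u p.1) (u p.2)
  have h2 := gromovProduct_isometry f w (u p.1) (u p.2)
  dsimp only
  linarith

theorem seqEquiv_isometry {w : X} (f : X ≃ᵢ X) {u v : ℕ → X}
    (h : SeqEquiv w u v) :
    SeqEquiv w (fun n => f (u n)) (fun n => f (v n)) := by
  refine tendsto_atTop_mono (fun p => ?_)
    (tendsto_atTop_add_const_right atTop (-dist w (f.symm w)) h)
  have h1 := gromovProduct_basepoint_ge w (f.symm w) (u p.1) (v p.2)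
  have h2 := gromovProduct_isometry f w (u p.1) (v p.2)
  dsimp only
  linarith

/-- The extension of an isometry of `X` to the Gromov boundary. -/
def boundaryMap (w : X) (f : X ≃ᵢ X) : GromovBoundary w → GromovBoundary w :=
  Quot.lift
    (fun u : BoundarySeq w =>
      boundaryPt w ⟨fun n => f (u.1 n), convergesToInfinity_isometry f u.2⟩)
    (fun _ _ h => Quot.sound (seqEquiv_isometry f h))

/-- The extension of an isometry of `X` to `X̄ = X ∪ ∂X`. -/
def closureMap (w : X) (f : X ≃ᵢ X) : GromovClosure w → GromovClosure w
  | Sum.inl x => Sum.inl (f x)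
  | Sum.inr a => Sum.inr (boundaryMap w f a)

/-- The Gromov product of a boundary point with a point of `X̄`, extended by
taking infima of liminfs over representative sequences. -/
noncomputable def boundaryGP (w : X) (a : GromovBoundary w) : GromovClosure w → ℝ
  | Sum.inl p => sInf {r : ℝ | ∃ u : BoundarySeq w, boundaryPt w u = a ∧
      r = Filter.liminf (fun n => gromovProduct w (u.1 n) p) atTop}
  | Sum.inr b => sInf {r : ℝ | ∃ u v : BoundarySeq w, boundaryPt w u = a ∧
      boundaryPt w v = b ∧
      r = Filter.liminf (fun n => gromovProduct w (u.1 n) (v.1 n)) atTop}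

/-- The basis for the topology on `X̄`: open balls in `X`, and the sets
`N(â,k) = {y : (â·y)_w > k}` for boundary points `â` and `k > 0`. -/
def closureBasis (w : X) : Set (Set (GromovClosure w)) :=
  {S | (∃ (x : X) (r : ℝ), 0 < r ∧ S = Sum.inl '' Metric.ball x r) ∨
       (∃ (a : GromovBoundary w) (k : ℝ), 0 < k ∧ S = {y | k < boundaryGP w a y})}

/-- The topology on `X̄` generated by the basis above. -/
def closureTop (w : X) : TopologicalSpace (GromovClosure w) :=
  TopologicalSpace.generateFrom (closureBasis w)

/-- `S ⊆ X̄` is a neighborhood of `p ∈ X̄`. -/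
def IsNeighborhood (w : X) (S : Set (GromovClosure w)) (p : GromovClosure w) : Prop :=
  S ∈ @nhds (GromovClosure w) (closureTop w) p

/-- `a ∈ ∂X` is the attracting fixed point of `f`: it is represented by the
sequence `(f^n x)` for a point `x ∈ X`. -/
def IsAttractingFixedPt (w : X) (f : X ≃ᵢ X) (a : GromovBoundary w) : Prop :=
  ∃ (x : X) (h : ConvergesToInfinity w (fun n : ℕ => (f ^ (n : ℤ)) x)),
    boundaryPt w ⟨fun n : ℕ => (f ^ (n : ℤ)) x, h⟩ = a

/-- `a ∈ ∂X` is the repelling fixed point of `f`: the attracting fixed point of `f⁻¹`. -/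
def IsRepellingFixedPt (w : X) (f : X ≃ᵢ X) (a : GromovBoundary w) : Prop :=
  IsAttractingFixedPt w f⁻¹ a

/-- The concatenation `α · (f α)` of a path `α` defined on `[0, L]` with its
image under `f`, parametrized on `[0, 2L]`. -/
noncomputable def concatPath (f : X ≃ᵢ X) (α : ℝ → X) (L : ℝ) : ℝ → X :=
  fun s => if s ≤ L then α s else f (α (s - L))

-- appended to defs.lean for testing
namespace Work

variable (w : X)

theorem gp_nonneg (p q : X) : 0 ≤ gromovProduct w p q := by
  have := dist_triangle p w q
  unfold gromovProduct; linarith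

theorem gp_le_left (p q : X) : gromovProduct w p q ≤ dist p w := by
  unfold gromovProduct; rw [dist_comm p q]; linarith [dist_triangle q p w, dist_comm q w, dist_triangle w p q]

theorem gp_le_right (p q : X) : gromovProduct w p q ≤ dist w q := by
  have := dist_triangle p q w
  unfold gromovProduct; linarith [dist_comm q w]

theorem gp_comm (p q : X) : gromovProduct w p q = gromovProduct w q p := by
  unfold gromovProduct; rw [dist_comm p w, dist_comm w q, dist_comm p q]; ring

theorem gp_lip (p p' q : X) : gromovProduct w p' q - dist p p' ≤ gromovProduct w p q := by
  have h1 : dist p' w ≤ dist p' p + dist p w := dist_triangle p' p w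
  have h2 : dist p q ≤ dist p p' + dist p' q := dist_triangle p p' q
  have h3 := dist_comm p p'
  unfold gromovProduct; linarith

theorem dist_eq_gp (p q : X) : dist p q = dist p w + dist w q - 2 * gromovProduct w p q := by
  unfold gromovProduct; ring

/-- quantified form of `SeqEquiv`. -/
def SeqE (u v : ℕ → X) : Prop :=
  ∀ C : ℝ, ∃ N : ℕ, ∀ i ≥ N, ∀ j ≥ N, C ≤ gromovProduct w (u i) (v j)

theorem seqEquiv_iff_seqE {u v : ℕ → X} : SeqEquiv w u v ↔ SeqE w u v := by
  constructor
  · intro h C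
    obtain ⟨a, ha⟩ := Filter.eventually_atTop.1 (Filter.tendsto_atTop.1 h C)
    exact ⟨max a.1 a.2, fun i hi j hj => ha (i, j)
      ⟨le_trans (le_max_left _ _) hi, le_trans (le_max_right _ _) hj⟩⟩
  · intro h
    refine Filter.tendsto_atTop.2 fun C => Filter.eventually_atTop.2 ?_
    obtain ⟨N, hN⟩ := h C
    exact ⟨(N, N), fun b hb => hN b.1 hb.1 b.2 hb.2⟩

theorem conv_iff_seqE {u : ℕ → X} : ConvergesToInfinity w u ↔ SeqE w u u :=
  seqEquiv_iff_seqE w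

theorem seqE_symm {u v : ℕ → X} (h : SeqE w u v) : SeqE w v u := by
  intro C
  obtain ⟨N, hN⟩ := h C
  exact ⟨N, fun i hi j hj => (gp_comm w _ _) ▸ hN j hj i hi⟩

variable {δ : ℝ}
  (h4 : ∀ w' x y z : X, min (gromovProduct w' x y) (gromovProduct w' y z) - δ ≤ gromovProduct w' x z)

include h4 in
theorem seqE_trans {u v z : ℕ → X} (h1 : SeqE w u v) (h2 : SeqE w v z) : SeqE w u z := by
  intro C
  obtain ⟨N1, hN1⟩ := h1 (C + δ)
  obtain ⟨N2, hN2⟩ := h2 (C + δ)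
  refine ⟨max N1 N2, fun i hi j hj => ?_⟩
  have hk : max N1 N2 ≥ N1 := le_max_left _ _
  have hk2 : max N1 N2 ≥ N2 := le_max_right _ _
  have a1 := hN1 i (le_trans hk hi) (max N1 N2) hk
  have a2 := hN2 (max N1 N2) hk2 j (le_trans hk2 hj)
  have hm : min (gromovProduct w (u i) (v (max N1 N2))) (gromovProduct w (v (max N1 N2)) (z j)) ≥ C + δ :=
    le_min a1 a2
  linarith [h4 w (u i) (v (max N1 N2)) (z j)]

omit h4 in
theorem class_eq_of_seqE {u v : BoundarySeq w} (h : SeqE w u.1 v.1) :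
    boundaryPt w u = boundaryPt w v :=
  Quot.sound ((seqEquiv_iff_seqE w).2 h)

include h4 in
theorem seqE_of_class_eq {u v : BoundarySeq w} (h : boundaryPt w u = boundaryPt w v) :
    SeqE w u.1 v.1 := by
  have hE := Quot.eqvGen_exact h
  clear h
  induction hE with
  | rel a b hab => exact (seqEquiv_iff_seqE w).1 hab
  | refl a => exact (conv_iff_seqE w).1 a.2
  | symm a b _ ih => exact seqE_symm w ih
  | trans a b c _ _ ih1 ih2 => exact seqE_trans w h4 ih1 ih2

theorem liminf_nonneg {u : ℕ → ℝ} (h : ∀ n, 0 ≤ u n) : 0 ≤ liminf u atTop := by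
  rw [Filter.liminf_eq]
  by_cases hb : BddAbove {a | ∀ᶠ n in atTop, a ≤ u n}
  · exact le_csSup hb (by filter_upwards with n using h n)
  · rw [Real.sSup_of_not_bddAbove hb]

end Work
namespace Work

variable {X : Type u} [MetricSpace X] (w : X) {δ : ℝ}
  (h4 : ∀ w' x y z : X, min (gromovProduct w' x y) (gromovProduct w' y z) - δ ≤ gromovProduct w' x z)

include h4 in
/-- Certification lemma: if `k < (a · A)` then every representative sequence of `A`
eventually consists of points `p` with `k < (a · p)`. -/
theorem certify (a A : GromovBoundary w) (k : ℝ)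
    (hk : k < boundaryGP w a (Sum.inr A)) (z : ℕ → X) (hzc : ConvergesToInfinity w z)
    (hcl : boundaryPt w ⟨z, hzc⟩ = A) :
    ∀ᶠ n in atTop, k < boundaryGP w a (Sum.inl (z n)) := by
  by_contra hcon
  rw [Filter.not_eventually] at hcon
  set σ := boundaryGP w a (Sum.inr A) with hσdef
  set η := (σ - k) / 2 with hηdef
  have hησ : k + η < σ := by
    have : k < σ := hk
    rw [hηdef]; linarith
  obtain ⟨ua, hua⟩ := Quot.exists_rep a
  have main : ∀ r : ℕ, ∃ (n : ℕ) (uB : BoundarySeq w) (j Nr : ℕ),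
      r ≤ n ∧ boundaryPt w uB = a ∧
      gromovProduct w (uB.1 j) (z n) < k + η ∧
      (∀ q ≥ Nr, (r : ℝ) ≤ gromovProduct w (uB.1 j) (ua.1 q)) := by
    intro r
    obtain ⟨n, hn, hbad⟩ := Filter.frequently_atTop.1 hcon r
    push_neg at hbad
    have hset : boundaryGP w a (Sum.inl (z n)) = sInf {rr : ℝ | ∃ u : BoundarySeq w,
        boundaryPt w u = a ∧
        rr = Filter.liminf (fun n' => gromovProduct w (u.1 n') (z n)) atTop} := rfl
    have hne : Set.Nonempty {rr : ℝ | ∃ u : BoundarySeq w, boundaryPt w u = a ∧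
        rr = Filter.liminf (fun n' => gromovProduct w (u.1 n') (z n)) atTop} :=
      ⟨_, ua, hua, rfl⟩
    have hlt : sInf {rr : ℝ | ∃ u : BoundarySeq w, boundaryPt w u = a ∧
        rr = Filter.liminf (fun n' => gromovProduct w (u.1 n') (z n)) atTop} < k + η := by
      rw [← hset]
      have hη0 : 0 < η := by rw [hηdef]; linarith [hk]
      linarith
    obtain ⟨rr, hrrmem, hrlt⟩ := exists_lt_of_csInf_lt hne hlt
    obtain ⟨uB, huB, hrr⟩ := hrrmem
    have hbddab : Filter.IsBoundedUnder (· ≤ ·) atTop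
        (fun j => gromovProduct w (uB.1 j) (z n)) :=
      Filter.isBoundedUnder_of ⟨dist w (z n), fun j => gp_le_right w _ _⟩
    have hfreq : ∃ᶠ j in atTop, gromovProduct w (uB.1 j) (z n) < k + η := by
      refine Filter.frequently_lt_of_liminf_lt ?_ ?_
      · exact hbddab.isCoboundedUnder_flip
      · rw [← hrr]; exact hrlt
    have hse : SeqE w uB.1 ua.1 :=
      seqE_of_class_eq w h4 (u := uB) (v := ua) (by rw [huB]; exact hua.symm)
    obtain ⟨Nr, hNr⟩ := hse r
    obtain ⟨j, hj, hjbad⟩ := Filter.frequently_atTop.1 hfreq Nr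
    exact ⟨n, uB, j, Nr, hn, huB, hjbad, fun q hq => hNr j hj q hq⟩
  choose nn uu jj NN hge hclassu hbad hdeep using main
  set ut : ℕ → X := fun r => (uu r).1 (jj r) with hut
  set vt : ℕ → X := fun r => z (nn r) with hvt
  have hConvua : SeqE w ua.1 ua.1 := (conv_iff_seqE w).1 ua.2
  have hseq_ut_ua : SeqE w ut ua.1 := by
    intro C
    obtain ⟨natC, hnatC⟩ := exists_nat_ge (C + δ)
    obtain ⟨N0, hN0⟩ := hConvua (C + δ)
    refine ⟨max natC N0, fun r hr q hq => ?_⟩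
    have hrnat : (natC : ℝ) ≤ (r : ℝ) := by
      exact_mod_cast le_trans (le_max_left natC N0) hr
    have d1 : (r : ℝ) ≤ gromovProduct w (ut r) (ua.1 (max (NN r) N0)) :=
      hdeep r _ (le_max_left _ _)
    have d2 : C + δ ≤ gromovProduct w (ua.1 (max (NN r) N0)) (ua.1 q) :=
      hN0 _ (le_max_right _ _) q (le_trans (le_max_right _ _) hq)
    have hmin : C + δ ≤ min (gromovProduct w (ut r) (ua.1 (max (NN r) N0)))
        (gromovProduct w (ua.1 (max (NN r) N0)) (ua.1 q)) :=
      le_min (by linarith) d2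
    linarith [h4 w (ut r) (ua.1 (max (NN r) N0)) (ua.1 q)]
  have hconv_ut : SeqE w ut ut := seqE_trans w h4 hseq_ut_ua (seqE_symm w hseq_ut_ua)
  have hconvz : SeqE w z z := (conv_iff_seqE w).1 hzc
  have hseq_vt_z : SeqE w vt z := by
    intro C
    obtain ⟨N, hN⟩ := hconvz C
    exact ⟨N, fun r hr q hq => hN (nn r) (le_trans hr (hge r)) q hq⟩
  have hconv_vt : SeqE w vt vt := seqE_trans w h4 hseq_vt_z (seqE_symm w hseq_vt_z)
  set utB : BoundarySeq w := ⟨ut, (conv_iff_seqE w).2 hconv_ut⟩ with hutB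
  set vtB : BoundarySeq w := ⟨vt, (conv_iff_seqE w).2 hconv_vt⟩ with hvtB
  have hcl_ut : boundaryPt w utB = a := by
    refine (class_eq_of_seqE w (u := utB) (v := ua) hseq_ut_ua).trans hua
  have hcl_vt : boundaryPt w vtB = A := by
    refine (class_eq_of_seqE w (u := vtB) (v := ⟨z, hzc⟩) hseq_vt_z).trans hcl
  have hbdd : BddBelow {rr : ℝ | ∃ u v : BoundarySeq w, boundaryPt w u = a ∧
      boundaryPt w v = A ∧
      rr = Filter.liminf (fun n => gromovProduct w (u.1 n) (v.1 n)) atTop} := by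
    refine ⟨0, fun rr hrr => ?_⟩
    obtain ⟨u', v', _, _, hr⟩ := hrr
    rw [hr]
    exact liminf_nonneg (fun n => gp_nonneg w _ _)
  have hmem : Filter.liminf (fun r => gromovProduct w (utB.1 r) (vtB.1 r)) atTop ∈
      {rr : ℝ | ∃ u v : BoundarySeq w, boundaryPt w u = a ∧ boundaryPt w v = A ∧
      rr = Filter.liminf (fun n => gromovProduct w (u.1 n) (v.1 n)) atTop} :=
    ⟨utB, vtB, hcl_ut, hcl_vt, rfl⟩
  have h1 : σ ≤ Filter.liminf (fun r => gromovProduct w (utB.1 r) (vtB.1 r)) atTop :=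
    csInf_le hbdd hmem
  have h2 : Filter.liminf (fun r => gromovProduct w (utB.1 r) (vtB.1 r)) atTop ≤ k + η := by
    refine Filter.liminf_le_of_frequently_le ?_ ?_
    · exact Filter.Frequently.of_forall fun r => (hbad r).le
    · exact Filter.isBoundedUnder_of ⟨0, fun r => gp_nonneg w _ _⟩
  linarith

end Work
namespace Work

variable {X : Type u} [MetricSpace X]

theorem genOpen_finset {Y : Type u} {B : Set (Set Y)} {O : Set Y}
    (h : TopologicalSpace.GenerateOpen B O) :
    ∀ p ∈ O, ∃ T : Finset (Set Y), (∀ t ∈ T, t ∈ B ∧ p ∈ t) ∧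
      (⋂₀ (T : Set (Set Y))) ⊆ O := by
  classical
  induction h with
  | basic s hs =>
      intro p hp
      refine ⟨{s}, by simp [hs, hp], by simp⟩
  | univ =>
      intro p _
      exact ⟨∅, by simp, by simp⟩
  | inter s t _ _ ih1 ih2 =>
      intro p hp
      obtain ⟨T1, h1, hsub1⟩ := ih1 p hp.1
      obtain ⟨T2, h2, hsub2⟩ := ih2 p hp.2
      refine ⟨T1 ∪ T2, ?_, ?_⟩
      · intro t' ht'
        rcases Finset.mem_union.1 ht' with h | h
        exacts [h1 t' h, h2 t' h]
      · intro y hy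
        have hy' : ∀ t' ∈ (T1 ∪ T2 : Finset (Set Y)), y ∈ t' := by
          intro t' ht'; exact hy t' (by exact_mod_cast ht')
        constructor
        · exact hsub1 (fun t' ht' => hy' t' (Finset.mem_union_left _ (by exact_mod_cast ht')))
        · exact hsub2 (fun t' ht' => hy' t' (Finset.mem_union_right _ (by exact_mod_cast ht')))
  | sUnion S _ ih =>
      intro p hp
      obtain ⟨s, hsS, hps⟩ := hp
      obtain ⟨T, hT, hsub⟩ := ih s hsS p hps
      exact ⟨T, hT, hsub.trans (Set.subset_sUnion_of_mem hsS)⟩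

theorem nbhd_structure {w : X} {U : Set (GromovClosure w)} {A : GromovBoundary w}
    (hU : IsNeighborhood w U (Sum.inr A)) :
    ∃ T : Finset (Set (GromovClosure w)),
      (∀ t ∈ T, ∃ (a : GromovBoundary w) (k : ℝ), 0 < k ∧
        k < boundaryGP w a (Sum.inr A) ∧ t = {y | k < boundaryGP w a y}) ∧
      ⋂₀ (T : Set (Set (GromovClosure w))) ⊆ U := by
  unfold IsNeighborhood at hU
  replace hU := (@_root_.mem_nhds_iff _ (closureTop w) (Sum.inr A : GromovClosure w) U).1 hU
  obtain ⟨O, hOU, hOopen, hpO⟩ := hU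
  have hgen : TopologicalSpace.GenerateOpen (closureBasis w) O := hOopen
  obtain ⟨T, hT, hsub⟩ := genOpen_finset hgen _ hpO
  refine ⟨T, fun t ht => ?_, hsub.trans hOU⟩
  obtain ⟨htB, hmem⟩ := hT t ht
  rcases htB with ⟨x', r, _, rfl⟩ | ⟨a, k, hk, rfl⟩
  · exfalso
    obtain ⟨q, _, hq⟩ := hmem
    simp at hq
  · exact ⟨a, k, hk, hmem, rfl⟩

variable (w : X) {δ : ℝ}
  (h4 : ∀ w' x y z : X, min (gromovProduct w' x y) (gromovProduct w' y z) - δ ≤ gromovProduct w' x z)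

include h4 in
theorem eventually_mem {U : Set (GromovClosure w)} {A : GromovBoundary w}
    (hU : IsNeighborhood w U (Sum.inr A))
    (z : ℕ → X) (hzc : ConvergesToInfinity w z) (hcl : boundaryPt w ⟨z, hzc⟩ = A) :
    ∀ᶠ n in atTop, Sum.inl (z n) ∈ U := by
  obtain ⟨T, hT, hsub⟩ := nbhd_structure hU
  have hall : ∀ t ∈ T, ∀ᶠ n in atTop, Sum.inl (z n) ∈ t := by
    intro t ht
    obtain ⟨a, k, _, hk, rfl⟩ := hT t ht
    filter_upwards [certify w h4 a A k hk z hzc hcl] with n hn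
    exact hn
  filter_upwards [(Finset.eventually_all T).2 hall] with n hn
  refine hsub (Set.mem_sInter.2 fun t ht => hn t (by exact_mod_cast ht))

end Work
namespace Work

variable {X : Type u} [MetricSpace X] (w : X)

theorem seqE_close {u u' v v' : ℕ → X} {c c' : ℝ} (hu : ∀ n, dist (u n) (u' n) ≤ c)
    (hv : ∀ n, dist (v n) (v' n) ≤ c') (h : SeqE w u v) : SeqE w u' v' := by
  intro C
  obtain ⟨N, hN⟩ := h (C + c + c')
  refine ⟨N, fun i hi j hj => ?_⟩
  have l1 : gromovProduct w (u i) (v j) - dist (u' i) (u i) ≤ gromovProduct w (u' i) (v j) :=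
    gp_lip w (u' i) (u i) (v j)
  have l2 : gromovProduct w (v' j) (u' i) ≥ gromovProduct w (v j) (u' i) - dist (v' j) (v j) :=
    gp_lip w (v' j) (v j) (u' i)
  have e1 : dist (u' i) (u i) ≤ c := (dist_comm (u' i) (u i)) ▸ hu i
  have e2 : dist (v' j) (v j) ≤ c' := (dist_comm (v' j) (v j)) ▸ hv j
  have hc := hN i hi j hj
  have c1 := gp_comm w (v j) (u' i)
  have c2 := gp_comm w (v' j) (u' i)
  linarith

variable {δ : ℝ}
  (h4 : ∀ w' x y z : X, min (gromovProduct w' x y) (gromovProduct w' y z) - δ ≤ gromovProduct w' x z)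

include h4 in
theorem orbit_setup (F : X ≃ᵢ X) (A : GromovBoundary w)
    (hA : IsAttractingFixedPt w F A) (x : X) :
    ∃ hc : ConvergesToInfinity w (fun n => (F ^ n) x),
      boundaryPt w ⟨fun n => (F ^ n) x, hc⟩ = A := by
  obtain ⟨x₀, h₀, hA₀⟩ := hA
  have hkey : ∀ n : ℕ, dist ((F ^ (n : ℤ)) x₀) ((F ^ n) x) ≤ dist x₀ x := by
    intro n
    rw [zpow_natCast]
    rw [(F ^ n).dist_eq]
  have hse : SeqE w (fun n => (F ^ n) x) (fun n : ℕ => (F ^ (n : ℤ)) x₀) := by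
    refine seqE_close w (u := fun n : ℕ => (F ^ (n : ℤ)) x₀) (v := fun n : ℕ => (F ^ (n : ℤ)) x₀)
      (c := dist x₀ x) (c' := 0) hkey (fun n => by simp) ((conv_iff_seqE w).1 h₀)
  have hconv : SeqE w (fun n => (F ^ n) x) (fun n => (F ^ n) x) :=
    seqE_trans w h4 hse (seqE_symm w hse)
  refine ⟨(conv_iff_seqE w).2 hconv, ?_⟩
  exact (class_eq_of_seqE w (u := ⟨_, (conv_iff_seqE w).2 hconv⟩) (v := ⟨_, h₀⟩) hse).trans hA₀

theorem inv_pow_apply_pow (F : X ≃ᵢ X) (j : ℕ) (z : X) : ((F⁻¹) ^ j) ((F ^ j) z) = z := by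
  rw [inv_pow]
  simp

theorem pow_apply_inv_pow (F : X ≃ᵢ X) (j : ℕ) (z : X) : (F ^ j) (((F⁻¹) ^ j) z) = z := by
  rw [inv_pow]
  simp

theorem dist_pow_pull (F : X ≃ᵢ X) {m j : ℕ} (hj : j ≤ m) (p q : X) :
    dist ((F ^ m) p) ((F ^ j) q) = dist ((F ^ (m - j)) p) q := by
  have h1 : (F ^ m) p = (F ^ j) ((F ^ (m - j)) p) := by
    have : F ^ m = F ^ j * F ^ (m - j) := by rw [← pow_add, Nat.add_sub_cancel' hj]
    rw [this]; rfl
  rw [h1, (F ^ j).dist_eq]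

theorem dist_pow_self (F : X ≃ᵢ X) (j : ℕ) (x : X) :
    dist ((F ^ j) x) x = dist x (((F⁻¹) ^ j) x) := by
  have := ((F⁻¹) ^ j).dist_eq ((F ^ j) x) x
  rw [inv_pow_apply_pow] at this
  rw [← this]

/-- Alignment of `f^m (g x)` with the forward orbit. -/
theorem align (f g : X ≃ᵢ X) (x : X) {m j : ℕ} (hj : j ≤ m) (D : ℝ)
    (hD : gromovProduct w (g x) (((f⁻¹) ^ m) x) ≤ D) :
    gromovProduct w (((f⁻¹) ^ m) x) (((f⁻¹) ^ j) x) - (D + 3 * dist w x)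
      ≤ gromovProduct w ((f ^ m) (g x)) ((f ^ j) x) := by
  set W := dist w x with hW
  set q : X := (f ^ m) (g x) with hq
  set um : ℕ → X := fun n => ((f⁻¹) ^ n) x with hum
  set up : ℕ → X := fun n => (f ^ n) x with hup
  -- distance identities
  have I1 : dist q x = dist (g x) (um m) := by
    have := ((f⁻¹) ^ m).dist_eq q x
    rw [hq, inv_pow_apply_pow] at this
    rw [hq, ← this]
  have I2 : dist q (up j) = dist ((f ^ (m - j)) (g x)) x := dist_pow_pull f hj (g x) x
  have I3 : dist ((f ^ (m - j)) (g x)) x ≤ dist (g x) x + dist x (um (m - j)) := by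
    have t1 : dist ((f ^ (m - j)) (g x)) ((f ^ (m - j)) x) = dist (g x) x :=
      (f ^ (m - j)).dist_eq (g x) x
    have t2 : dist ((f ^ (m - j)) x) x = dist x (um (m - j)) := dist_pow_self f (m - j) x
    calc dist ((f ^ (m - j)) (g x)) x
        ≤ dist ((f ^ (m - j)) (g x)) ((f ^ (m - j)) x) + dist ((f ^ (m - j)) x) x :=
          dist_triangle _ _ _
      _ = dist (g x) x + dist x (um (m - j)) := by rw [t1, t2]
  have I4 : dist x (up j) = dist x (um j) := by
    rw [dist_comm x (up j)]
    exact dist_pow_self f j x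
  have I5 : dist (um m) (um j) = dist x (um (m - j)) := by
    have h := dist_pow_pull (f⁻¹) hj x x
    calc dist (um m) (um j) = dist ((f⁻¹ ^ (m - j)) x) x := h
      _ = dist x (um (m - j)) := dist_comm _ _
  -- gromov product expansions at basepoint x
  have E1 : dist (g x) (um m) = dist (g x) x + dist x (um m) - 2 * gromovProduct x (g x) (um m) :=
    dist_eq_gp x (g x) (um m)
  have E2 : gromovProduct x (g x) (um m) ≤ gromovProduct w (g x) (um m) + dist x w := by
    linarith [gromovProduct_basepoint_ge x w (g x) (um m)]
  have E3 : gromovProduct x q (up j) = (dist q x + dist x (up j) - dist q (up j)) / 2 := rfl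
  have E4 : gromovProduct w q (up j) ≥ gromovProduct x q (up j) - dist x w := by
    linarith [gromovProduct_basepoint_ge x w q (up j)]
  have E5 : gromovProduct x (um m) (um j) =
      (dist (um m) x + dist x (um j) - dist (um m) (um j)) / 2 := rfl
  have E6 : gromovProduct w (um m) (um j) ≤ gromovProduct x (um m) (um j) + dist w x := by
    linarith [gromovProduct_basepoint_ge w x (um m) (um j)]
  have hWc : dist x w = W := by rw [hW, dist_comm]
  have hdc : dist (um m) x = dist x (um m) := dist_comm _ _
  have hD' : gromovProduct w (g x) (um m) ≤ D := hD
  linarith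
end Work
namespace Work

variable {X : Type u} [MetricSpace X]

theorem key_bound (δ : ℝ) (hX : IsDeltaHyperbolic X δ) (w : X) (f : X ≃ᵢ X)
    (Aplus Aminus : GromovBoundary w)
    (hAp : IsAttractingFixedPt w f Aplus) (hAm : IsRepellingFixedPt w f Aminus)
    (Uplus Uminus : Set (GromovClosure w))
    (hUp : IsNeighborhood w Uplus (Sum.inr Aplus))
    (hUm : IsNeighborhood w Uminus (Sum.inr Aminus))
    (x : X) (hx : Sum.inl x ∈ Uplus) :
    ∃ C : ℝ, 0 ≤ C ∧ ∃ M1 : ℕ, ∀ g : X ≃ᵢ X,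
      (closureMap w g '' Uplus) ∩ Uminus = ∅ → ∀ m : ℕ, M1 ≤ m →
      gromovProduct w (((f ^ m * g)⁻¹) x) ((f ^ m * g) x) ≤ C := by
  have h4 := hX.gromov
  have hδ := hX.delta_nonneg
  set W := dist w x with hW
  obtain ⟨hcup, hclup⟩ := orbit_setup w h4 f Aplus hAp x
  obtain ⟨hcum, hclum⟩ := orbit_setup w h4 (f⁻¹) Aminus hAm x
  set up : ℕ → X := fun n => (f ^ n) x with hupdef
  set um : ℕ → X := fun n => ((f⁻¹) ^ n) x with humdef
  have hEup : SeqE w up up := (conv_iff_seqE w).1 hcup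
  have hEum : SeqE w um um := (conv_iff_seqE w).1 hcum
  have hviol : ∀ g : X ≃ᵢ X, (closureMap w g '' Uplus) ∩ Uminus = ∅ →
      ∀ y : X, Sum.inl y ∈ Uplus → Sum.inl (g y) ∈ Uminus → False := by
    intro g hg y h1 h2
    have hmem : (Sum.inl (g y) : GromovClosure w) ∈ (closureMap w g '' Uplus) ∩ Uminus :=
      ⟨⟨Sum.inl y, h1, rfl⟩, h2⟩
    rw [hg] at hmem
    exact hmem
  obtain ⟨M0, hM0⟩ := Filter.eventually_atTop.1 (eventually_mem w h4 hUm um hcum hclum)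
  have stepD : ∃ D : ℝ, ∃ M2 : ℕ, ∀ g : X ≃ᵢ X,
      (closureMap w g '' Uplus) ∩ Uminus = ∅ → ∀ m : ℕ, M2 ≤ m →
      gromovProduct w (g x) (um m) ≤ D := by
    by_contra hcon
    push_neg at hcon
    have pick : ∀ n : ℕ, ∃ (g : X ≃ᵢ X) (m : ℕ),
        ((closureMap w g '' Uplus) ∩ Uminus = ∅) ∧ n ≤ m ∧
        (n : ℝ) < gromovProduct w (g x) (um m) := by
      intro n
      obtain ⟨g, hg, m, hm, hgt⟩ := hcon (n : ℝ) n
      exact ⟨g, m, hg, hm, hgt⟩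
    choose gg mm hallow hmge hgp using pick
    have hseq : SeqE w (fun r => gg r x) um := by
      intro C
      obtain ⟨N0, hN0⟩ := hEum (C + δ)
      obtain ⟨natC, hnatC⟩ := exists_nat_ge (C + δ)
      refine ⟨max natC N0, fun r hr j hj => ?_⟩
      have hr1 : natC ≤ r := le_trans (le_max_left _ _) hr
      have hr2 : N0 ≤ r := le_trans (le_max_right _ _) hr
      have hj2 : N0 ≤ j := le_trans (le_max_right _ _) hj
      have b1 : C + δ ≤ gromovProduct w (gg r x) (um (mm r)) := by
        have hcast : (natC : ℝ) ≤ (r : ℝ) := by exact_mod_cast hr1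
        linarith [hgp r]
      have b2 : C + δ ≤ gromovProduct w (um (mm r)) (um j) :=
        hN0 (mm r) (le_trans hr2 (hmge r)) j hj2
      have hmin := le_min b1 b2
      linarith [h4 w (gg r x) (um (mm r)) (um j)]
    have hconv : SeqE w (fun r => gg r x) (fun r => gg r x) :=
      seqE_trans w h4 hseq (seqE_symm w hseq)
    have hclz : boundaryPt w ⟨fun r => gg r x, (conv_iff_seqE w).2 hconv⟩ = Aminus :=
      (class_eq_of_seqE w (u := ⟨fun r => gg r x, (conv_iff_seqE w).2 hconv⟩)
        (v := ⟨um, hcum⟩) hseq).trans hclum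
    obtain ⟨r, hrU⟩ :=
      (eventually_mem w h4 hUm (fun r => gg r x) ((conv_iff_seqE w).2 hconv) hclz).exists
    exact hviol (gg r) (hallow r) x hx hrU
  obtain ⟨D, M2, hstepD⟩ := stepD
  by_contra hcon
  push_neg at hcon
  have pick : ∀ n : ℕ, ∃ (g : X ≃ᵢ X) (m : ℕ),
      ((closureMap w g '' Uplus) ∩ Uminus = ∅) ∧ (max n (max M2 M0)) ≤ m ∧
      (n : ℝ) < gromovProduct w (((f ^ m * g)⁻¹) x) ((f ^ m * g) x) := by
    intro n
    obtain ⟨g, hg, m, hm, hgt⟩ := hcon (n : ℝ) (Nat.cast_nonneg n) (max n (max M2 M0))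
    exact ⟨g, m, hg, hm, hgt⟩
  choose gg mm hallow hmge hQ using pick
  set ps : ℕ → X := fun r => ((f ^ (mm r) * gg r)⁻¹) x with hpsdef
  have hqs : ∀ r, (f ^ (mm r) * gg r) x = (f ^ (mm r)) (gg r x) := fun r => rfl
  have hM2le : ∀ r, M2 ≤ mm r :=
    fun r => le_trans (le_trans (le_max_left M2 M0) (le_max_right r _)) (hmge r)
  have hM0le : ∀ r, M0 ≤ mm r :=
    fun r => le_trans (le_trans (le_max_right M2 M0) (le_max_right r _)) (hmge r)
  have hrle : ∀ r, r ≤ mm r := fun r => le_trans (le_max_left _ _) (hmge r)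
  have hps_img : ∀ r, (gg r) (ps r) = um (mm r) := by
    intro r
    show (gg r) (((f ^ (mm r) * gg r)⁻¹) x) = um (mm r)
    rw [mul_inv_rev]
    have h1 : (gg r) (((gg r)⁻¹ * (f ^ (mm r))⁻¹) x) = ((f ^ (mm r))⁻¹) x := by
      show (gg r) ((gg r)⁻¹ (((f ^ (mm r))⁻¹) x)) = ((f ^ (mm r))⁻¹) x
      simp
    rw [h1]
    show ((f ^ (mm r))⁻¹) x = ((f⁻¹) ^ (mm r)) x
    rw [inv_pow]
  have halign : ∀ r j, j ≤ mm r →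
      gromovProduct w (um (mm r)) (um j) - (D + 3 * W)
        ≤ gromovProduct w ((f ^ (mm r)) (gg r x)) (up j) := by
    intro r j hj
    exact align w f (gg r) x hj D (hstepD (gg r) (hallow r) (mm r) (hM2le r))
  have hEps : SeqE w ps up := by
    intro C
    obtain ⟨natC, hnatC⟩ := exists_nat_ge (C + 2 * δ)
    obtain ⟨Nm, hNm⟩ := hEum (C + 2 * δ + (D + 3 * W))
    obtain ⟨Np, hNp⟩ := hEup (C + δ)
    refine ⟨max natC (max Nm Np), fun r hr j hj => ?_⟩
    have hrn : (natC : ℝ) ≤ (r : ℝ) := by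
      exact_mod_cast le_trans (le_max_left _ _) hr
    have hrNm : Nm ≤ r := le_trans (le_trans (le_max_left _ _) (le_max_right _ _)) hr
    have hrNp : Np ≤ r := le_trans (le_trans (le_max_right _ _) (le_max_right _ _)) hr
    have base : ∀ j', Nm ≤ j' → j' ≤ mm r → C + δ ≤ gromovProduct w (ps r) (up j') := by
      intro j' hj1 hj2
      have a1 : C + 2 * δ ≤ gromovProduct w (ps r) ((f ^ (mm r)) (gg r x)) := by
        have hq := hQ r
        rw [hqs r] at hq
        calc C + 2 * δ ≤ (natC : ℝ) := hnatC
          _ ≤ (r : ℝ) := hrn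
          _ ≤ _ := le_of_lt hq
      have a2 : C + 2 * δ ≤ gromovProduct w ((f ^ (mm r)) (gg r x)) (up j') := by
        have b := halign r j' hj2
        have c := hNm (mm r) (le_trans hrNm (hrle r)) j' hj1
        linarith
      have hmin := le_min a1 a2
      linarith [h4 w (ps r) ((f ^ (mm r)) (gg r x)) (up j')]
    by_cases hcase : j ≤ mm r
    · have hb := base j (le_trans (le_trans (le_max_left _ _) (le_max_right _ _)) hj) hcase
      linarith
    · push_neg at hcase
      have b1 : C + δ ≤ gromovProduct w (ps r) (up (mm r)) :=
        base (mm r) (le_trans hrNm (hrle r)) le_rfl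
      have b2 : C + δ ≤ gromovProduct w (up (mm r)) (up j) :=
        hNp (mm r) (le_trans hrNp (hrle r)) j
          (le_trans (le_trans (le_max_right _ _) (le_max_right _ _)) hj)
      have hmin := le_min b1 b2
      linarith [h4 w (ps r) (up (mm r)) (up j)]
  have hconvps : SeqE w ps ps := seqE_trans w h4 hEps (seqE_symm w hEps)
  have hclps : boundaryPt w ⟨ps, (conv_iff_seqE w).2 hconvps⟩ = Aplus :=
    (class_eq_of_seqE w (u := ⟨ps, (conv_iff_seqE w).2 hconvps⟩)
      (v := ⟨up, hcup⟩) hEps).trans hclup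
  obtain ⟨r, hrU⟩ :=
    (eventually_mem w h4 hUp ps ((conv_iff_seqE w).2 hconvps) hclps).exists
  refine hviol (gg r) (hallow r) (ps r) hrU ?_
  rw [hps_img r]
  exact hM0 (mm r) (hM0le r)

end Work
namespace Work

variable {X : Type u} [MetricSpace X]

theorem gp_conj (F : X ≃ᵢ X) (x : X) :
    gromovProduct (F x) x (F (F x)) = gromovProduct x (F⁻¹ x) (F x) := by
  have h := gromovProduct_isometry F (F x) (F⁻¹ x) (F x)
  rw [show F (F⁻¹ x) = x by simp, show F.symm (F x) = x by simp] at h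
  exact h

theorem concat_est (δ : ℝ) (hδ : 0 ≤ δ)
    (h4 : ∀ w' x y z : X,
      min (gromovProduct w' x y) (gromovProduct w' y z) - δ ≤ gromovProduct w' x z)
    (F : X ≃ᵢ X) (x : X) (α : ℝ → X) (hα : IsGeodesicSegment α x (F x))
    (B : ℝ) (hB : gromovProduct (F x) x (F (F x)) ≤ B)
    {s t : ℝ} (hs : s ∈ Set.Icc (0:ℝ) (2 * dist x (F x)))
    (ht : t ∈ Set.Icc (0:ℝ) (2 * dist x (F x))) (hst : s ≤ t) :
    |s - t| - (2 * B + 4 * δ) ≤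
      dist (concatPath F α (dist x (F x)) s) (concatPath F α (dist x (F x)) t) ∧
    dist (concatPath F α (dist x (F x)) s) (concatPath F α (dist x (F x)) t) ≤
      |s - t| + (2 * B + 4 * δ) := by
  set L := dist x (F x) with hL
  have h0L : 0 ≤ L := dist_nonneg
  have hB0 : 0 ≤ B := le_trans (gp_nonneg (F x) x (F (F x))) hB
  have habs : |s - t| = t - s := by
    rw [abs_sub_comm]; exact abs_of_nonneg (by linarith)
  have hs0 : 0 ≤ s := hs.1
  have ht2 : t ≤ 2 * L := ht.2
  by_cases hcs : s ≤ L
  · by_cases hct : t ≤ L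
    · -- both on the first segment
      have hd : dist (α s) (α t) = |s - t| :=
        hα.isom ⟨hs0, hcs⟩ ⟨le_trans hs0 hst, hct⟩
      rw [concatPath, concatPath, if_pos hcs, if_pos hct, hd]
      constructor <;> linarith
    · -- mixed case
      push_neg at hct
      rw [concatPath, concatPath, if_pos hcs, if_neg (not_le.2 hct)]
      set p := α s with hp
      set q := F (α (t - L)) with hq'
      have hmem_s : s ∈ Set.Icc (0:ℝ) L := ⟨hs0, hcs⟩
      have hmem_tL : t - L ∈ Set.Icc (0:ℝ) L := ⟨by linarith, by linarith⟩
      have hmem_0 : (0:ℝ) ∈ Set.Icc (0:ℝ) L := ⟨le_refl _, h0L⟩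
      have hmem_L : L ∈ Set.Icc (0:ℝ) L := ⟨h0L, le_refl _⟩
      have hαL : α L = F x := hα.target
      have hα0 : α 0 = x := hα.source
      have d1 : dist p (F x) = L - s := by
        have := hα.isom hmem_s hmem_L
        rw [hαL] at this
        rw [hp, this, abs_of_nonpos (by linarith)]; ring
      have d0 : dist x p = s := by
        have := hα.isom hmem_0 hmem_s
        rw [hα0] at this
        rw [hp, this, abs_of_nonpos (by linarith)]; ring
      have d2 : dist (F x) q = t - L := by
        rw [hq']
        have h2 : dist (F x) (F (α (t - L))) = dist x (α (t - L)) := F.dist_eq x _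
        have h3 := hα.isom hmem_0 hmem_tL
        rw [hα0] at h3
        rw [h2, h3, abs_of_nonpos (by linarith)]; ring
      have d3 : dist q (F (F x)) = 2 * L - t := by
        rw [hq']
        have h2 : dist (F (α (t - L))) (F (F x)) = dist (α (t - L)) (F x) := F.dist_eq _ _
        have h3 := hα.isom hmem_tL hmem_L
        rw [hαL] at h3
        rw [h2, h3, abs_of_nonpos (by linarith)]; ring
      have d4 : dist (F x) (F (F x)) = L := (F.dist_eq x (F x)).trans hL.symm
      set P := gromovProduct (F x) p q with hP
      have gpxp : gromovProduct (F x) x p = L - s := by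
        unfold gromovProduct
        have e1 : dist x (F x) = L := hL.symm
        have e2 : dist (F x) p = L - s := (dist_comm (F x) p).trans d1
        rw [e1, e2, d0]
        ring
      have gpqF : gromovProduct (F x) q (F (F x)) = t - L := by
        unfold gromovProduct
        have e1 : dist q (F x) = t - L := (dist_comm q (F x)).trans d2
        rw [e1, d4, d3]
        ring
      have Pd1 : P ≤ L - s := by
        have h := gp_le_left (F x) p q
        rw [d1] at h
        exact h
      have Pd2 : P ≤ t - L := by
        have h := gp_le_right (F x) p q
        rw [d2] at h
        exact h
      have P0 : 0 ≤ P := gp_nonneg _ _ _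
      have chain1 := h4 (F x) x p q
      have chain2 := h4 (F x) x q (F (F x))
      rw [gpxp] at chain1
      rw [gpqF] at chain2
      have c1 : P - δ ≤ gromovProduct (F x) x q := by
        have hmin : min (L - s) P = P := min_eq_right Pd1
        rw [hmin] at chain1
        linarith
      have c2 : P - 2 * δ ≤ B := by
        have hmin2 : P - δ ≤ min (gromovProduct (F x) x q) (t - L) :=
          le_min c1 (by linarith)
        calc P - 2 * δ ≤ min (gromovProduct (F x) x q) (t - L) - δ := by linarith
          _ ≤ gromovProduct (F x) x (F (F x)) := chain2
          _ ≤ B := hB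
      have hdpq : dist p q = (L - s) + (t - L) - 2 * P := by
        have h := dist_eq_gp (F x) p q
        rw [d1, d2, ← hP] at h
        exact h
      constructor
      · rw [habs]; linarith
      · rw [habs]; linarith
  · -- both on the second segment
    push_neg at hcs
    have hct : ¬ t ≤ L := by push_neg; linarith
    rw [concatPath, concatPath, if_neg (not_le.2 hcs), if_neg hct]
    have hmem_s : s - L ∈ Set.Icc (0:ℝ) L := ⟨by linarith, by linarith [hs.2]⟩
    have hmem_t : t - L ∈ Set.Icc (0:ℝ) L := ⟨by linarith, by linarith⟩
    have hd : dist (α (s - L)) (α (t - L)) = |s - t| := by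
      rw [hα.isom hmem_s hmem_t]
      congr 1
      ring
    have h2 : dist (F (α (s - L))) (F (α (t - L))) = dist (α (s - L)) (α (t - L)) :=
      F.dist_eq _ _
    rw [h2, hd]
    constructor <;> linarith

end Work
/-- With `f`, `A₊`, `A₋`, `U₊`, `U₋` as before and `x ∈ X ∩ U₊`,
there are `ε ≥ 0` and `M₁ ≥ 0` depending only on `δ`, `f`, `x`, `U₊`, `U₋` such
that for every isometry `g` with `g U₊ ∩ U₋ = ∅`, every `m ≥ M₁` and every
geodesic `α` from `x` to `f^m g x`, the concatenation `α · (f^m g α)` (a path from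
`x` to `(f^m g)² x` parametrized on `[0, 2L]` where `L = d(x, f^m g x)`) is a
`(1,ε)`-quasi-geodesic. -/
theorem concatenation_quasi_geodesic (δ : ℝ) (hX : IsDeltaHyperbolic X δ) (w : X)
    (f : X ≃ᵢ X) (hf : IsHyperbolicIsometry f)
    (Aplus Aminus : GromovBoundary w)
    (hAp : IsAttractingFixedPt w f Aplus) (hAm : IsRepellingFixedPt w f Aminus)
    (Uplus Uminus : Set (GromovClosure w))
    (hUp : IsNeighborhood w Uplus (Sum.inr Aplus))
    (hUm : IsNeighborhood w Uminus (Sum.inr Aminus))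
    (hdisj : Uplus ∩ Uminus = ∅)
    (x : X) (hx : Sum.inl x ∈ Uplus) :
    ∃ ε : ℝ, 0 ≤ ε ∧ ∃ M1 : ℕ, ∀ g : X ≃ᵢ X,
      (closureMap w g '' Uplus) ∩ Uminus = ∅ →
      ∀ m : ℕ, M1 ≤ m →
      ∀ α : ℝ → X, IsGeodesicSegment α x ((f ^ m * g) x) →
      ∀ s ∈ Set.Icc (0 : ℝ) (2 * dist x ((f ^ m * g) x)),
      ∀ t ∈ Set.Icc (0 : ℝ) (2 * dist x ((f ^ m * g) x)),
        |s - t| - ε ≤ dist (concatPath (f ^ m * g) α (dist x ((f ^ m * g) x)) s)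
            (concatPath (f ^ m * g) α (dist x ((f ^ m * g) x)) t) ∧
        dist (concatPath (f ^ m * g) α (dist x ((f ^ m * g) x)) s)
            (concatPath (f ^ m * g) α (dist x ((f ^ m * g) x)) t) ≤ |s - t| + ε := by
  obtain ⟨C, hC0, M1, hkey⟩ :=
    Work.key_bound δ hX w f Aplus Aminus hAp hAm Uplus Uminus hUp hUm x hx
  have hδ := hX.delta_nonneg
  refine ⟨2 * (C + dist x w) + 4 * δ, by linarith [dist_nonneg (x := x) (y := w)], M1, ?_⟩
  intro g hg m hm α hα s hs t ht
  set F : X ≃ᵢ X := f ^ m * g with hF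
  have hbound : gromovProduct (F x) x (F (F x)) ≤ C + dist x w := by
    rw [Work.gp_conj F x]
    have h1 := hkey g hg m hm
    have h2 := gromovProduct_basepoint_ge x w (F⁻¹ x) (F x)
    linarith
  rcases le_total s t with hst | hst
  · exact Work.concat_est δ hδ hX.gromov F x α hα (C + dist x w) hbound hs ht hst
  · have h := Work.concat_est δ hδ hX.gromov F x α hα (C + dist x w) hbound ht hs hst
    rw [abs_sub_comm t s,
      dist_comm (concatPath F α (dist x (F x)) t) (concatPath F α (dist x (F x)) s)] at h
    exact h
end
end

section
/- Let X be a δ-hyperbolic geodesic metric space, let f ∈ Isom(X) be a hyperbolic isometry with attracting and repelling fixed points A_+ and A_- in ∂X, fix disjoint neighborhoods U_+ and U_- of A_+ and A_- in X̄, and fix x ∈ X ∩ U_+. Then there exist C ≥ 0 and M_1 ≥ 0, depending only on δ, f, x, U_+ and U_-, such that for every g ∈ Isom(X) with g U_+ ∩ U_- = ∅ and every m ≥ M_1: d(x, (f^m g)^2 x) ≥ 2 d(x, f^m g x) − 2C. -/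
open Filter Metric Set

noncomputable section

universe u

variable {X : Type u} [MetricSpace X]

namespace BF6

theorem gp_nonneg (w x y : X) : 0 ≤ gromovProduct w x y := by
  have h := dist_triangle x w y
  unfold gromovProduct; linarith

theorem gp_symm (w x y : X) : gromovProduct w x y = gromovProduct w y x := by
  unfold gromovProduct
  rw [dist_comm x w, dist_comm w y, dist_comm x y]; ring

theorem gp_le_right (w x y : X) : gromovProduct w x y ≤ dist w y := by
  have h := dist_triangle x y w
  rw [dist_comm y w] at h
  unfold gromovProduct; linarith [dist_comm x y ▸ h]

theorem gp_le_left (w x y : X) : gromovProduct w x y ≤ dist x w := by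
  have h := dist_triangle w x y
  rw [dist_comm w x] at h
  unfold gromovProduct; linarith

theorem gp_lip_right (w x y y' : X) :
    gromovProduct w x y ≤ gromovProduct w x y' + dist y y' := by
  have h1 := dist_triangle w y' y
  have h2 := dist_triangle x y y'
  rw [dist_comm y' y] at h1
  unfold gromovProduct; linarith

theorem gp_lip_left (w x x' y : X) :
    gromovProduct w x y ≤ gromovProduct w x' y + dist x x' := by
  have h1 := dist_triangle x x' w
  have h2 := dist_triangle x' x y
  rw [dist_comm x' x] at h2
  unfold gromovProduct; linarith

theorem gp_dist (w y z : X) :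
    dist y z = dist y w + dist w z - 2 * gromovProduct w y z := by
  unfold gromovProduct; ring

/- liminf toolkit -/

theorem lim_lower {f : ℕ → ℝ} {a B : ℝ} (hb : ∀ n, f n ≤ B)
    (h : ∀ᶠ n in atTop, a ≤ f n) : a ≤ liminf f atTop := by
  rw [Filter.liminf_eq]
  refine le_csSup ⟨B, fun c hc => ?_⟩ h
  obtain ⟨n, hn⟩ := hc.exists
  exact hn.trans (hb n)

theorem lim_upper {f : ℕ → ℝ} {B : ℝ} (hB : 0 ≤ B) (hb : ∀ n, f n ≤ B) :
    liminf f atTop ≤ B := by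
  rw [Filter.liminf_eq]
  refine Real.sSup_le (fun c hc => ?_) hB
  obtain ⟨n, hn⟩ := hc.exists
  exact hn.trans (hb n)

theorem lim_nonneg {f : ℕ → ℝ} (h0 : ∀ n, 0 ≤ f n) : 0 ≤ liminf f atTop := by
  rw [Filter.liminf_eq]
  by_cases hbd : BddAbove {a | ∀ᶠ n in atTop, a ≤ f n}
  · exact le_csSup hbd (Filter.Eventually.of_forall h0)
  · rw [Real.sSup_of_not_bddAbove hbd]

theorem lim_freq_lt {f : ℕ → ℝ} {B c : ℝ} (hb : ∀ n, f n ≤ B)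
    (h : liminf f atTop < c) : ∃ᶠ n in atTop, f n < c := by
  by_contra hcon
  rw [Filter.not_frequently] at hcon
  have : c ≤ liminf f atTop :=
    lim_lower hb (hcon.mono fun n hn => not_lt.1 hn)
  linarith

theorem lim_ev_ge {f : ℕ → ℝ} {c : ℝ} (h0 : ∀ n, 0 ≤ f n)
    (h : c < liminf f atTop) : ∀ᶠ n in atTop, c ≤ f n := by
  rw [Filter.liminf_eq] at h
  obtain ⟨a, ha, hca⟩ := exists_lt_of_lt_csSup
    (s := {a | ∀ᶠ n in atTop, a ≤ f n}) ⟨0, Filter.Eventually.of_forall h0⟩ h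
  exact ha.mono fun n hn => (le_of_lt hca).trans hn

/- product filter characterizations -/

theorem tendsto_pair_iff {F : ℕ × ℕ → ℝ} :
    Tendsto F atTop atTop ↔ ∀ K : ℝ, ∃ N : ℕ, ∀ i j, N ≤ i → N ≤ j → K ≤ F (i, j) := by
  rw [Filter.tendsto_atTop]
  constructor
  · intro h K
    have h2 := h K
    rw [Filter.eventually_atTop] at h2
    obtain ⟨a, ha⟩ := h2
    refine ⟨max a.1 a.2, fun i j hi hj => ha (i, j) ?_⟩
    exact ⟨le_trans (le_max_left _ _) hi, le_trans (le_max_right _ _) hj⟩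
  · intro h K
    obtain ⟨N, hN⟩ := h K
    rw [Filter.eventually_atTop]
    exact ⟨(N, N), fun b hb => hN b.1 b.2 hb.1 hb.2⟩

theorem seqEquiv_iff {w : X} {u v : ℕ → X} :
    SeqEquiv w u v ↔ ∀ K : ℝ, ∃ N : ℕ, ∀ i j, N ≤ i → N ≤ j →
      K ≤ gromovProduct w (u i) (v j) :=
  tendsto_pair_iff

theorem conv_iff {w : X} {u : ℕ → X} :
    ConvergesToInfinity w u ↔ ∀ K : ℝ, ∃ N : ℕ, ∀ i j, N ≤ i → N ≤ j →
      K ≤ gromovProduct w (u i) (u j) :=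
  tendsto_pair_iff

theorem seqEquiv_symm {w : X} {u v : ℕ → X} (h : SeqEquiv w u v) : SeqEquiv w v u := by
  rw [seqEquiv_iff] at h ⊢
  intro K
  obtain ⟨N, hN⟩ := h K
  exact ⟨N, fun i j hi hj => by rw [gp_symm]; exact hN j i hj hi⟩

theorem seqEquiv_trans {δ : ℝ} (hX : IsDeltaHyperbolic X δ) {w : X} {u v z : ℕ → X}
    (h1 : SeqEquiv w u v) (h2 : SeqEquiv w v z) : SeqEquiv w u z := by
  rw [seqEquiv_iff] at h1 h2 ⊢
  intro K
  obtain ⟨N1, hN1⟩ := h1 (K + δ)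
  obtain ⟨N2, hN2⟩ := h2 (K + δ)
  refine ⟨max N1 N2, fun i j hi hj => ?_⟩
  have hg := hX.gromov w (u i) (v (max N1 N2)) (z j)
  have a1 := hN1 i (max N1 N2) (le_trans (le_max_left _ _) hi) (le_max_left _ _)
  have a2 := hN2 (max N1 N2) j (le_max_right _ _) (le_trans (le_max_right _ _) hj)
  have hm := le_min a1 a2
  linarith

theorem eqvGen_seqEquiv {δ : ℝ} (hX : IsDeltaHyperbolic X δ) {w : X} {u v : BoundarySeq w}
    (h : Relation.EqvGen (fun a b : BoundarySeq w => SeqEquiv w a.1 b.1) u v) :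
    SeqEquiv w u.1 v.1 := by
  induction h with
  | rel _ _ h => exact h
  | refl a => exact a.2
  | symm _ _ _ ih => exact seqEquiv_symm ih
  | trans _ _ _ _ _ ih1 ih2 => exact seqEquiv_trans hX ih1 ih2

theorem rep_seqEquiv {δ : ℝ} (hX : IsDeltaHyperbolic X δ) {w : X} {u v : BoundarySeq w}
    (h : boundaryPt w u = boundaryPt w v) : SeqEquiv w u.1 v.1 := by
  unfold boundaryPt at h
  exact eqvGen_seqEquiv hX (Quot.eq.1 h)

theorem core {δ : ℝ} (hX : IsDeltaHyperbolic X δ) (w : X)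
    (b ξ : GromovBoundary w) (v : BoundarySeq w) (hv : boundaryPt w v = ξ)
    {l : ℝ} (hl0 : 0 ≤ l) (hl : l < boundaryGP w b (Sum.inr ξ))
    (z : ℕ → X)
    (hz : Tendsto (fun s => liminf (fun n => gromovProduct w (z s) (v.1 n)) atTop) atTop atTop) :
    ∀ᶠ s in atTop, l < boundaryGP w b (Sum.inl (z s)) := by
  obtain ⟨u1, hu1⟩ := Quot.exists_rep b
  by_contra hcon
  rw [Filter.not_eventually] at hcon
  set t := boundaryGP w b (Sum.inr ξ) with ht
  -- selection of bad indices with large depth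
  have hsel : ∀ k : ℕ, ∃ s : ℕ, boundaryGP w b (Sum.inl (z s)) ≤ l ∧
      (k : ℝ) ≤ liminf (fun n => gromovProduct w (z s) (v.1 n)) atTop := by
    intro k
    have hev := Filter.tendsto_atTop.1 hz (k : ℝ)
    rw [Filter.eventually_atTop] at hev
    obtain ⟨S, hS⟩ := hev
    obtain ⟨s, hsS, hsl⟩ := (Filter.frequently_atTop.1 hcon) S
    exact ⟨s, not_lt.1 hsl, hS s hsS⟩
  choose σ hσl hσk using hsel
  set Z : ℕ → X := fun k => z (σ k) with hZdef
  -- representatives of b with dips against Z k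
  have hrep : ∀ k : ℕ, ∃ u : BoundarySeq w, boundaryPt w u = b ∧
      liminf (fun n => gromovProduct w (u.1 n) (Z k)) atTop < l + (t - l) / 2 := by
    intro k
    have hne : {r : ℝ | ∃ u : BoundarySeq w, boundaryPt w u = b ∧
        r = liminf (fun n => gromovProduct w (u.1 n) (Z k)) atTop}.Nonempty :=
      ⟨_, u1, hu1, rfl⟩
    have hble : boundaryGP w b (Sum.inl (Z k)) ≤ l := hσl k
    have hlt : sInf {r : ℝ | ∃ u : BoundarySeq w, boundaryPt w u = b ∧
        r = liminf (fun n => gromovProduct w (u.1 n) (Z k)) atTop} < l + (t - l) / 2 := by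
      have : boundaryGP w b (Sum.inl (Z k)) = sInf {r : ℝ | ∃ u : BoundarySeq w,
          boundaryPt w u = b ∧
          r = liminf (fun n => gromovProduct w (u.1 n) (Z k)) atTop} := rfl
      rw [this] at hble
      have hlt2 : l < l + (t - l) / 2 := by
        rw [ht] at *
        linarith
      exact lt_of_le_of_lt hble hlt2
    obtain ⟨r, ⟨u, hub, hr⟩, hrlt⟩ := exists_lt_of_csInf_lt hne hlt
    exact ⟨u, hub, hr ▸ hrlt⟩
  choose uk hukb huklt using hrep
  -- thresholds from equivalence with u1
  have hseq : ∀ k, SeqEquiv w (uk k).1 u1.1 :=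
    fun k => rep_seqEquiv hX ((hukb k).trans hu1.symm)
  have hNk : ∀ k : ℕ, ∃ N : ℕ, ∀ i j, N ≤ i → N ≤ j →
      (k : ℝ) ≤ gromovProduct w ((uk k).1 i) (u1.1 j) :=
    fun k => (seqEquiv_iff.1 (hseq k)) (k : ℝ)
  choose N hN using hNk
  -- thresholds for depth of Z k
  have hPk : ∀ k : ℕ, ∃ P : ℕ, ∀ n, P ≤ n →
      (k : ℝ) - 1 ≤ gromovProduct w (Z k) (v.1 n) := by
    intro k
    have hev := lim_ev_ge (fun n => gp_nonneg w (Z k) (v.1 n))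
      (lt_of_lt_of_le (by linarith : (k : ℝ) - 1 < (k : ℝ)) (hσk k))
    rw [Filter.eventually_atTop] at hev
    exact hev
  choose P hP using hPk
  -- dipping indices
  have hnk : ∀ k : ℕ, ∃ n : ℕ, N k ≤ n ∧
      gromovProduct w ((uk k).1 n) (Z k) < l + (t - l) / 2 := by
    intro k
    have hfr := lim_freq_lt (fun n => gp_le_right w ((uk k).1 n) (Z k)) (huklt k)
    obtain ⟨n, hn1, hn2⟩ := (Filter.frequently_atTop.1 hfr) (N k)
    exact ⟨n, hn1, hn2⟩
  choose n hnN hndip using hnk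
  set U : ℕ → X := fun k => (uk k).1 (n k) with hUdef
  have hUu1 : ∀ k j, N k ≤ j → (k : ℝ) ≤ gromovProduct w (U k) (u1.1 j) :=
    fun k j hj => hN k (n k) j (hnN k) hj
  have hu1big := conv_iff.1 u1.2
  have hvbig := conv_iff.1 v.2
  -- U is equivalent to u1
  have hequivU : SeqEquiv w U u1.1 := by
    rw [seqEquiv_iff]
    intro K
    obtain ⟨R, hR⟩ := hu1big (K + δ)
    obtain ⟨N', hN'⟩ := exists_nat_ge (K + δ)
    refine ⟨max N' R, fun k j hk hj => ?_⟩
    have hkN' : (K + δ : ℝ) ≤ (k : ℝ) :=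
      hN'.trans (by exact_mod_cast le_trans (le_max_left _ _) hk)
    have h1 : K + δ ≤ gromovProduct w (U k) (u1.1 (max (N k) R)) :=
      hkN'.trans (hUu1 k _ (le_max_left _ _))
    have h2 : K + δ ≤ gromovProduct w (u1.1 (max (N k) R)) (u1.1 j) :=
      hR _ j (le_max_right _ _) (le_trans (le_max_right _ _) hj)
    have hg := hX.gromov w (U k) (u1.1 (max (N k) R)) (u1.1 j)
    have hm := le_min h1 h2
    linarith
  have hconvU : ConvergesToInfinity w U := by
    rw [conv_iff]
    intro K
    obtain ⟨N', hN'⟩ := exists_nat_ge (K + δ)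
    refine ⟨N', fun k k' hk hk' => ?_⟩
    have h1 : K + δ ≤ gromovProduct w (U k) (u1.1 (max (N k) (N k'))) :=
      (hN'.trans (by exact_mod_cast hk)).trans (hUu1 k _ (le_max_left _ _))
    have h2 : K + δ ≤ gromovProduct w (u1.1 (max (N k) (N k'))) (U k') := by
      rw [gp_symm]
      exact (hN'.trans (by exact_mod_cast hk')).trans (hUu1 k' _ (le_max_right _ _))
    have hg := hX.gromov w (U k) (u1.1 (max (N k) (N k'))) (U k')
    have hm := le_min h1 h2
    linarith
  -- Z is equivalent to v
  have hequivZ : SeqEquiv w Z v.1 := by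
    rw [seqEquiv_iff]
    intro K
    obtain ⟨R, hR⟩ := hvbig (K + δ)
    obtain ⟨N', hN'⟩ := exists_nat_ge (K + δ + 1)
    refine ⟨max N' R, fun k j hk hj => ?_⟩
    have hkN' : (K + δ + 1 : ℝ) ≤ (k : ℝ) :=
      hN'.trans (by exact_mod_cast le_trans (le_max_left _ _) hk)
    have h1 : K + δ ≤ gromovProduct w (Z k) (v.1 (max (P k) R)) := by
      have := hP k (max (P k) R) (le_max_left _ _)
      linarith
    have h2 : K + δ ≤ gromovProduct w (v.1 (max (P k) R)) (v.1 j) :=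
      hR _ j (le_max_right _ _) (le_trans (le_max_right _ _) hj)
    have hg := hX.gromov w (Z k) (v.1 (max (P k) R)) (v.1 j)
    have hm := le_min h1 h2
    linarith
  have hconvZ : ConvergesToInfinity w Z := by
    rw [conv_iff]
    intro K
    obtain ⟨N', hN'⟩ := exists_nat_ge (K + δ + 1)
    refine ⟨N', fun k k' hk hk' => ?_⟩
    have h1 : K + δ ≤ gromovProduct w (Z k) (v.1 (max (P k) (P k'))) := by
      have := hP k (max (P k) (P k')) (le_max_left _ _)
      have hc : (K + δ + 1 : ℝ) ≤ (k : ℝ) := hN'.trans (by exact_mod_cast hk)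
      linarith
    have h2 : K + δ ≤ gromovProduct w (v.1 (max (P k) (P k'))) (Z k') := by
      rw [gp_symm]
      have := hP k' (max (P k) (P k')) (le_max_right _ _)
      have hc : (K + δ + 1 : ℝ) ≤ (k' : ℝ) := hN'.trans (by exact_mod_cast hk')
      linarith
    have hg := hX.gromov w (Z k) (v.1 (max (P k) (P k'))) (Z k')
    have hm := le_min h1 h2
    linarith
  -- the resulting pair witnesses a small liminf in the defining set of t
  have hUb : boundaryPt w (⟨U, hconvU⟩ : BoundarySeq w) = b := by
    have hq : Quot.mk (fun a b : BoundarySeq w => SeqEquiv w a.1 b.1) ⟨U, hconvU⟩ =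
        Quot.mk (fun a b : BoundarySeq w => SeqEquiv w a.1 b.1) u1 := Quot.sound hequivU
    exact hq.trans hu1
  have hZb : boundaryPt w (⟨Z, hconvZ⟩ : BoundarySeq w) = ξ := by
    have hq : Quot.mk (fun a b : BoundarySeq w => SeqEquiv w a.1 b.1) ⟨Z, hconvZ⟩ =
        Quot.mk (fun a b : BoundarySeq w => SeqEquiv w a.1 b.1) v := Quot.sound hequivZ
    exact hq.trans hv
  have hmem : liminf (fun k => gromovProduct w (U k) (Z k)) atTop ∈
      {r : ℝ | ∃ u v' : BoundarySeq w, boundaryPt w u = b ∧ boundaryPt w v' = ξ ∧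
        r = liminf (fun n => gromovProduct w (u.1 n) (v'.1 n)) atTop} :=
    ⟨⟨U, hconvU⟩, ⟨Z, hconvZ⟩, hUb, hZb, rfl⟩
  have hbdd : BddBelow {r : ℝ | ∃ u v' : BoundarySeq w, boundaryPt w u = b ∧
      boundaryPt w v' = ξ ∧
      r = liminf (fun n => gromovProduct w (u.1 n) (v'.1 n)) atTop} := by
    refine ⟨0, fun r hr => ?_⟩
    obtain ⟨u, v', _, _, hr⟩ := hr
    exact hr ▸ lim_nonneg (fun nn => gp_nonneg w (u.1 nn) (v'.1 nn))
  have hte : t ≤ liminf (fun k => gromovProduct w (U k) (Z k)) atTop := by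
    rw [ht]
    exact csInf_le hbdd hmem
  have heup : liminf (fun k => gromovProduct w (U k) (Z k)) atTop ≤ l + (t - l) / 2 := by
    refine lim_upper (by rw [ht] at *; linarith) (fun k => le_of_lt (hndip k))
  rw [ht] at *
  linarith

theorem nhds_finset (w : X) {U : Set (GromovClosure w)} {pt : GromovClosure w}
    (h : IsNeighborhood w U pt) :
    ∃ F : Finset (Set (GromovClosure w)),
      (∀ s ∈ F, s ∈ closureBasis w ∧ pt ∈ s) ∧
      ⋂₀ (↑F : Set (Set (GromovClosure w))) ⊆ U := by
  classical
  have key : ∀ T : Set (GromovClosure w),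
      TopologicalSpace.GenerateOpen (closureBasis w) T →
      ∀ p ∈ T, ∃ F : Finset (Set (GromovClosure w)),
        (∀ s ∈ F, s ∈ closureBasis w ∧ p ∈ s) ∧
        ⋂₀ (↑F : Set (Set (GromovClosure w))) ⊆ T := by
    intro T hT
    induction hT with
    | basic s hs => exact fun p hp => ⟨{s}, by simp [hs, hp], by simp⟩
    | univ => exact fun p _ => ⟨∅, by simp, by simp⟩
    | inter s t _ _ ihs iht =>
        intro p hp
        obtain ⟨F1, h1, h1s⟩ := ihs p hp.1
        obtain ⟨F2, h2, h2s⟩ := iht p hp.2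
        refine ⟨F1 ∪ F2, ?_, ?_⟩
        · intro s' hs'
          rcases Finset.mem_union.1 hs' with hc | hc
          exacts [h1 s' hc, h2 s' hc]
        · rw [Finset.coe_union, Set.sInter_union]
          exact Set.inter_subset_inter h1s h2s
    | sUnion S hS ih =>
        intro p hp
        obtain ⟨s, hsS, hps⟩ := hp
        obtain ⟨F, hF, hFs⟩ := ih s hsS p hps
        exact ⟨F, hF, hFs.trans (Set.subset_sUnion_of_mem hsS)⟩
  obtain ⟨T, hTU, hTopen, hpT⟩ := (@mem_nhds_iff _ (closureTop w) pt U).1 h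
  have hgen : TopologicalSpace.GenerateOpen (closureBasis w) T := hTopen
  obtain ⟨F, hF, hFs⟩ := key T hgen pt hpT
  exact ⟨F, hF, hFs.trans hTU⟩

theorem depth_bound {δ : ℝ} (hX : IsDeltaHyperbolic X δ) (w : X)
    (A : GromovBoundary w) (v : BoundarySeq w) (hv : boundaryPt w v = A)
    (U : Set (GromovClosure w)) (hU : IsNeighborhood w U (Sum.inr A)) :
    ∃ L : ℝ, 0 ≤ L ∧ ∀ z : X, Sum.inl z ∉ U →
      liminf (fun n => gromovProduct w z (v.1 n)) atTop ≤ L := by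
  by_contra hcon
  push_neg at hcon
  have hsel : ∀ s : ℕ, ∃ z : X, Sum.inl z ∉ U ∧
      (s : ℝ) < liminf (fun n => gromovProduct w z (v.1 n)) atTop := by
    intro s
    obtain ⟨z, hz1, hz2⟩ := hcon (s : ℝ) (Nat.cast_nonneg s)
    exact ⟨z, hz1, hz2⟩
  choose z hzU hzl using hsel
  have hz : Tendsto (fun s => liminf (fun n => gromovProduct w (z s) (v.1 n)) atTop)
      atTop atTop :=
    tendsto_atTop_mono (fun s => le_of_lt (hzl s)) tendsto_natCast_atTop_atTop
  obtain ⟨F, hF, hFU⟩ := nhds_finset w hU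
  have hev : ∀ t ∈ F, ∀ᶠ s in atTop, Sum.inl (z s) ∈ t := by
    intro t ht
    obtain ⟨hbasis, hmem⟩ := hF t ht
    rcases hbasis with ⟨x', r, _, rfl⟩ | ⟨a, k, hk, rfl⟩
    · exfalso
      obtain ⟨x'', _, hx''⟩ := hmem
      exact Sum.inl_ne_inr hx''
    · have hka : k < boundaryGP w a (Sum.inr A) := hmem
      exact (core hX w a A v hv (le_of_lt hk) hka z hz).mono fun s hs => hs
  have hall := (Filter.eventually_all_finset F).2 hev
  obtain ⟨s, hs⟩ := hall.exists
  exact hzU s (hFU (Set.mem_sInter.2 fun t ht => hs t (Finset.mem_coe.1 ht)))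

end BF6

/-- With `f`, `A₊`, `A₋`, `U₊`, `U₋` as before and `x ∈ X ∩ U₊`,
there are `C ≥ 0` and `M₁ ≥ 0` depending only on `δ`, `f`, `x`, `U₊`, `U₋` such
that for every isometry `g` with `g U₊ ∩ U₋ = ∅` and every `m ≥ M₁`,
`d(x, (f^m g)² x) ≥ 2 d(x, f^m g x) − 2C`. -/
theorem square_dist_lower_bound (δ : ℝ) (hX : IsDeltaHyperbolic X δ) (w : X)
    (f : X ≃ᵢ X) (hf : IsHyperbolicIsometry f)
    (Aplus Aminus : GromovBoundary w)
    (hAp : IsAttractingFixedPt w f Aplus) (hAm : IsRepellingFixedPt w f Aminus)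
    (Uplus Uminus : Set (GromovClosure w))
    (hUp : IsNeighborhood w Uplus (Sum.inr Aplus))
    (hUm : IsNeighborhood w Uminus (Sum.inr Aminus))
    (hdisj : Uplus ∩ Uminus = ∅)
    (x : X) (hx : Sum.inl x ∈ Uplus) :
    ∃ C : ℝ, 0 ≤ C ∧ ∃ M1 : ℕ, ∀ g : X ≃ᵢ X,
      (closureMap w g '' Uplus) ∩ Uminus = ∅ →
      ∀ m : ℕ, M1 ≤ m →
        2 * dist x ((f ^ m * g) x) - 2 * C ≤ dist x (((f ^ m * g) ^ 2) x) := by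
  classical
  obtain ⟨x₀, h₀, hApt⟩ := hAp
  obtain ⟨x₁, h₁, hAmt⟩ := hAm
  set α : ℕ → X := fun n : ℕ => (f ^ (n : ℤ)) x₀ with hαdef
  set v : ℕ → X := fun n : ℕ => ((f⁻¹) ^ (n : ℤ)) x₁ with hvdef
  obtain ⟨t₀, ht₀pos, ht₀⟩ := hf x₀
  obtain ⟨t₁, ht₁pos, ht₁⟩ := hf x₁
  obtain ⟨L₀, hL₀0, hL₀⟩ := BF6.depth_bound hX w Aminus ⟨v, h₁⟩ hAmt Uminus hUm
  obtain ⟨K₀, hK₀0, hK₀⟩ := BF6.depth_bound hX w Aplus ⟨α, h₀⟩ hApt Uplus hUp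
  have hδ := hX.delta_nonneg
  have hvB := BF6.conv_iff.1 h₁
  have hαB := BF6.conv_iff.1 h₀
  obtain ⟨M₂, hM₂⟩ := hvB (L₀ + 1 + δ)
  obtain ⟨M₄, hM₄⟩ := hαB (K₀ + 2 + 2 * δ)
  obtain ⟨M₀, hM₀⟩ := hvB (L₀ + 1 + dist x x₁)
  obtain ⟨M₅, hM₅⟩ := exists_nat_ge
    ((2 * (K₀ + 2 + 2 * δ + L₀ + 1 + δ + dist w x₁) + 2 * dist w x₁ + 2 * dist w x₀) /
      (t₀ + t₁))
  refine ⟨K₀ + 1 + δ + dist x w, by linarith [dist_nonneg (x := x) (y := w)], ?_⟩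
  refine ⟨max (max M₀ M₂) (max M₄ M₅), ?_⟩
  intro g hg m hm
  have hmM₀ : M₀ ≤ m := le_trans (le_trans (le_max_left _ _) (le_max_left _ _)) hm
  have hmM₂ : M₂ ≤ m := le_trans (le_trans (le_max_right _ _) (le_max_left _ _)) hm
  have hmM₄ : M₄ ≤ m := le_trans (le_trans (le_max_left _ _) (le_max_right _ _)) hm
  have hmM₅ : M₅ ≤ m := le_trans (le_trans (le_max_right _ _) (le_max_right _ _)) hm
  set y : X := g x with hydef
  set q : X := (f ^ m) y with hqdef
  set p : X := ((f ^ m * g)⁻¹) x with hpdef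
  set zm : X := ((f ^ m)⁻¹) x with hzmdef
  have hvm_eq : v m = ((f ^ m)⁻¹) x₁ := by
    rw [hvdef]; simp only []; rw [zpow_natCast, inv_pow]
  have hαm_eq : α m = (f ^ m) x₀ := by
    rw [hαdef]; simp only []; rw [zpow_natCast]
  -- Step 1 : f^{-m} x ∈ U₋
  have hstep1 : Sum.inl zm ∈ Uminus := by
    by_contra hnot
    have hb := hL₀ zm hnot
    have hlow : (L₀ + 1 : ℝ) ≤ liminf (fun n => gromovProduct w zm (v n)) atTop := by
      refine BF6.lim_lower (fun n => BF6.gp_le_left w zm (v n)) ?_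
      rw [Filter.eventually_atTop]
      refine ⟨M₀, fun n hn => ?_⟩
      have hlip := BF6.gp_lip_left w (v m) zm (v n)
      have hdz : dist (v m) zm = dist x₁ x := by
        rw [hvm_eq, hzmdef, IsometryEquiv.dist_eq]
      have h3 := hM₀ m n hmM₀ hn
      rw [dist_comm x₁ x] at hdz
      linarith
    linarith
  -- Step 2 : locate y = g x and p = (f^m g)⁻¹ x
  have hdisj' := Set.eq_empty_iff_forall_notMem.1 hg
  have hyU : Sum.inl y ∉ Uminus := by
    intro hmem
    exact hdisj' (Sum.inl y) ⟨⟨Sum.inl x, hx, rfl⟩, hmem⟩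
  have hpU : Sum.inl p ∉ Uplus := by
    intro hmem
    refine hdisj' (Sum.inl zm) ⟨⟨Sum.inl p, hmem, ?_⟩, hstep1⟩
    show Sum.inl (g p) = Sum.inl zm
    rw [hpdef, hzmdef, mul_inv_rev, IsometryEquiv.mul_apply, IsometryEquiv.apply_inv_self]
  -- Step 3 : depth bounds for p and y
  have hψ : liminf (fun n => gromovProduct w p (α n)) atTop ≤ K₀ := hK₀ p hpU
  have hφy : liminf (fun n => gromovProduct w y (v n)) atTop ≤ L₀ := hL₀ y hyU
  -- Step 4 : (y · v m) bounded
  have hyvm : gromovProduct w y (v m) < L₀ + 1 + δ := by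
    have hfr := BF6.lim_freq_lt (fun n => BF6.gp_le_left w y (v n))
      (lt_of_le_of_lt hφy (by linarith : L₀ < L₀ + 1))
    obtain ⟨n, hn1, hn2⟩ := (Filter.frequently_atTop.1 hfr) M₂
    by_contra hge
    push_neg at hge
    have hg2 := hM₂ m n hmM₂ hn1
    have hgr := hX.gromov w y (v m) (v n)
    have hmin := le_min hge hg2
    linarith
  -- Step 5 : (q · α m) large
  have hdq1 : dist q (α m) ≤ dist y w + dist w x₀ := by
    rw [hqdef, hαm_eq, IsometryEquiv.dist_eq (f ^ m) y x₀]
    exact dist_triangle y w x₀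
  have hdqw : dist q w = dist y ((f ^ m)⁻¹ w) := by
    rw [hqdef, ← IsometryEquiv.dist_eq ((f ^ m)⁻¹) ((f ^ m) y) w,
      IsometryEquiv.inv_apply_self]
  have hgyw : gromovProduct w y ((f ^ m)⁻¹ w) ≤ L₀ + 1 + δ + dist w x₁ := by
    have hlip := BF6.gp_lip_right w y ((f ^ m)⁻¹ w) (v m)
    have hd : dist ((f ^ m)⁻¹ w) (v m) = dist w x₁ := by
      rw [hvm_eq, IsometryEquiv.dist_eq]
    linarith
  have hdfw : t₁ * m ≤ dist w ((f ^ m)⁻¹ w) + 2 * dist w x₁ := by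
    have h := ht₁ 0 (-(m : ℤ))
    simp only [zpow_zero, zero_sub, abs_neg, Int.cast_zero, Int.cast_neg, Int.cast_natCast] at h
    rw [zpow_neg, zpow_natCast] at h
    have h' : t₁ * m ≤ dist ((1 : X ≃ᵢ X) x₁) (((f ^ m)⁻¹) x₁) := by
      have habs : |(m : ℝ)| = (m : ℝ) := abs_of_nonneg (Nat.cast_nonneg m)
      calc t₁ * m = t₁ * |(0 : ℝ) - (m : ℝ)| := by
            rw [zero_sub, abs_neg, habs]
        _ ≤ _ := by
            have := ht₁ 0 (-(m : ℤ))
            rw [zpow_neg, zpow_natCast] at this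
            simpa using this
    have h1 : (1 : X ≃ᵢ X) x₁ = x₁ := rfl
    rw [h1] at h'
    have htri : dist x₁ (((f ^ m)⁻¹) x₁) ≤
        dist x₁ w + dist w ((f ^ m)⁻¹ w) + dist ((f ^ m)⁻¹ w) (((f ^ m)⁻¹) x₁) :=
      dist_triangle4 x₁ w ((f ^ m)⁻¹ w) (((f ^ m)⁻¹) x₁)
    have hlast : dist ((f ^ m)⁻¹ w) (((f ^ m)⁻¹) x₁) = dist w x₁ :=
      IsometryEquiv.dist_eq _ w x₁
    rw [hlast, dist_comm x₁ w] at htri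
    linarith
  have hdαw : t₀ * m ≤ dist w (α m) + dist w x₀ := by
    have h' : t₀ * m ≤ dist x₀ ((f ^ m) x₀) := by
      have habs : |(0 : ℝ) - (m : ℝ)| = (m : ℝ) := by
        rw [zero_sub, abs_neg, abs_of_nonneg (Nat.cast_nonneg m)]
      have h := ht₀ 0 (m : ℤ)
      rw [zpow_natCast] at h
      simpa [habs] using h
    have htri := dist_triangle x₀ w ((f ^ m) x₀)
    rw [hαm_eq, dist_comm x₀ w] at *
    linarith
  have hmul : 2 * (K₀ + 2 + 2 * δ + L₀ + 1 + δ + dist w x₁) + 2 * dist w x₁ +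
      2 * dist w x₀ ≤ (t₀ + t₁) * m := by
    have hcast : (M₅ : ℝ) ≤ (m : ℝ) := Nat.cast_le.2 hmM₅
    have hle := hM₅.trans hcast
    rw [div_le_iff₀ (by linarith : (0 : ℝ) < t₀ + t₁)] at hle
    linarith
  have hqαm : K₀ + 2 + 2 * δ ≤ gromovProduct w q (α m) := by
    have hyd : dist y ((f ^ m)⁻¹ w) =
        dist y w + dist w ((f ^ m)⁻¹ w) - 2 * gromovProduct w y ((f ^ m)⁻¹ w) :=
      BF6.gp_dist w y ((f ^ m)⁻¹ w)
    have hexp : gromovProduct w q (α m) =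
        (dist q w + dist w (α m) - dist q (α m)) / 2 := rfl
    rw [hexp, hdqw, hyd]
    nlinarith [hgyw, hdq1, hdfw, hdαw, hmul]
  -- Step 6 : (q · α j) large for all j ≥ m
  have hqαj : ∀ j : ℕ, m ≤ j → K₀ + 2 + δ ≤ gromovProduct w q (α j) := by
    intro j hj
    have hg1 := hM₄ m j hmM₄ (le_trans hmM₄ hj)
    have hgr := hX.gromov w q (α m) (α j)
    have hmin := le_min hqαm hg1
    linarith
  -- Step 7 : dip of p against the α-orbit
  have hfr := BF6.lim_freq_lt (fun n => BF6.gp_le_left w p (α n))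
    (lt_of_le_of_lt hψ (by linarith : K₀ < K₀ + 1))
  obtain ⟨j, hj1, hj2⟩ := (Filter.frequently_atTop.1 hfr) m
  -- Step 8 : Gromov product of p and q at w is small
  have hpq : gromovProduct w p q < K₀ + 1 + δ := by
    by_contra hge
    push_neg at hge
    have hgr := hX.gromov w p q (α j)
    have hq2 : (K₀ + 1 + δ : ℝ) ≤ gromovProduct w q (α j) :=
      le_trans (by linarith) (hqαj j hj1)
    have hmin := le_min hge hq2
    linarith
  -- Step 9 : move the basepoint to x
  have hshift := gromovProduct_basepoint_ge x w p q
  -- Step 10 : conclude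
  have hqx : (f ^ m * g) x = q := by
    rw [IsometryEquiv.mul_apply]
  have hsqx : ((f ^ m * g) ^ 2) x = (f ^ m * g) ((f ^ m * g) x) := by
    rw [sq, IsometryEquiv.mul_apply]
  have hfp : (f ^ m * g) p = x := by
    rw [hpdef]; exact IsometryEquiv.apply_inv_self _ _
  have hdsq : dist x (((f ^ m * g) ^ 2) x) = dist p q := by
    have e1 : dist p q = dist ((f ^ m * g) p) ((f ^ m * g) q) :=
      (IsometryEquiv.dist_eq _ _ _).symm
    have e3 : (f ^ m * g) q = ((f ^ m * g) ^ 2) x := by rw [hsqx, hqx]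
    rw [e1, hfp, e3]
  have hdpx : dist p x = dist x ((f ^ m * g) x) := by
    calc dist p x = dist ((f ^ m * g) p) ((f ^ m * g) x) :=
          (IsometryEquiv.dist_eq _ _ _).symm
      _ = dist x ((f ^ m * g) x) := by rw [hfp]
  have hdxq : dist x q = dist x ((f ^ m * g) x) := by rw [hqx]
  have hgpx : dist p q = dist p x + dist x q - 2 * gromovProduct x p q :=
    BF6.gp_dist x p q
  rw [hdsq]
  linarith
end
end

section
/- Let X be a δ-hyperbolic geodesic metric space and let f, g ∈ Isom(X) be dependent hyperbolic isometries, i.e. hyperbolic isometries such that the pair of attracting and repelling fixed points of f in ∂X and the pair of attracting and repelling fixed points of g in ∂X have nonempty intersection. Then there exists N ≥ 0 such that for every n ≥ N, the isometry f g^n is hyperbolic. -/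
open Filter Metric Set

noncomputable section

universe u

variable {X : Type u} [MetricSpace X]

theorem gp_nonneg (w x y : X) : 0 ≤ gromovProduct w x y := by
  have := dist_triangle x w y
  unfold gromovProduct; linarith

theorem gp_comm (w x y : X) : gromovProduct w x y = gromovProduct w y x := by
  unfold gromovProduct
  rw [dist_comm x w, dist_comm w y, dist_comm x y]; ring

theorem gp_self (x y : X) : gromovProduct x x y = 0 := by
  unfold gromovProduct; simp

theorem gp_id (x y z : X) : gromovProduct x y z + gromovProduct y x z = dist x y := by
  unfold gromovProduct
  rw [dist_comm y x, dist_comm x z]; ring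

theorem gp_perturb (w x y x' y' : X) :
    gromovProduct w x y ≤ gromovProduct w x' y' + dist x x' + dist y y' := by
  have h1 : dist x w ≤ dist x' w + dist x x' := by
    have := dist_triangle x x' w; linarith
  have h2 : dist w y ≤ dist w y' + dist y y' := by
    have := dist_triangle w y' y; rw [dist_comm y' y] at this; linarith
  have h3 : dist x' y' ≤ dist x x' + dist x y + dist y y' := by
    have t1 := dist_triangle x' x y'
    have t2 := dist_triangle x y y'
    rw [dist_comm x' x] at t1; linarith
  unfold gromovProduct; linarith

theorem gp_isom3 (e : X ≃ᵢ X) (w x y : X) :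
    gromovProduct (e w) (e x) (e y) = gromovProduct w x y := by
  unfold gromovProduct
  rw [e.dist_eq, e.dist_eq, e.dist_eq]

theorem zpow_apply_add (h : X ≃ᵢ X) (a b : ℤ) (x : X) :
    (h ^ (a + b)) x = (h ^ a) ((h ^ b) x) := by
  rw [zpow_add, IsometryEquiv.mul_apply]

theorem zpow_dist (h : X ≃ᵢ X) (a b : ℤ) (x : X) :
    dist ((h ^ a) x) ((h ^ b) x) = dist x ((h ^ (b - a)) x) := by
  have h1 : dist x ((h ^ (b - a)) x)
      = dist ((h ^ a) x) ((h ^ a) ((h ^ (b - a)) x)) := ((h ^ a).dist_eq x _).symm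
  rw [h1, ← zpow_apply_add, show a + (b - a) = b from by ring]

theorem dist_zpow_neg (h : X ≃ᵢ X) (b : ℤ) (x : X) :
    dist x ((h ^ (-b)) x) = dist x ((h ^ b) x) := by
  have h0 := zpow_dist h b 0 x
  rw [zero_sub] at h0
  rw [← h0]
  simp [dist_comm]

section Chain

variable (δ K L : ℝ) (y : ℤ → X)

theorem chain_a (hδ : 0 ≤ δ)
    (h4 : ∀ w x p q : X, min (gromovProduct w x p) (gromovProduct w p q) - δ ≤ gromovProduct w x q)
    (hK : ∀ i : ℤ, gromovProduct (y i) (y (i - 1)) (y (i + 1)) ≤ K)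
    (hL : ∀ i : ℤ, L ≤ dist (y i) (y (i + 1)))
    (hLK : 2 * K + 4 * δ + 1 ≤ L) :
    ∀ (n : ℕ) (i : ℤ), gromovProduct (y (i + n)) (y i) (y (i + n + 1)) ≤ K + δ := by
  have hK0 : 0 ≤ K := le_trans (gp_nonneg _ _ _) (hK 0)
  intro n
  induction n with
  | zero =>
    intro i
    push_cast
    rw [add_zero, gp_self]
    linarith
  | succ n ih =>
    intro i
    have hKδ : gromovProduct (y (i + n)) (y i) (y (i + n + 1)) ≤ K + δ := ih i
    have hbac : gromovProduct (y (i + n + 1)) (y (i + n)) (y (i + n + 2)) ≤ K := by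
      have h := hK (i + n + 1)
      rw [show i + (n : ℤ) + 1 - 1 = i + n from by ring,
        show i + (n : ℤ) + 1 + 1 = i + n + 2 from by ring] at h
      exact h
    have hid := gp_id (y (i + n + 1)) (y (i + n)) (y i)
    have hcm : gromovProduct (y (i + n)) (y (i + n + 1)) (y i)
        = gromovProduct (y (i + n)) (y i) (y (i + n + 1)) := gp_comm _ _ _
    have hdist : L ≤ dist (y (i + n + 1)) (y (i + n)) := by
      rw [dist_comm]; exact hL (i + n)
    have hba : L - (K + δ) ≤ gromovProduct (y (i + n + 1)) (y (i + n)) (y i) := by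
      rw [hcm] at hid; linarith
    have h4' := h4 (y (i + n + 1)) (y (i + n)) (y i) (y (i + n + 2))
    have goal2 : gromovProduct (y (i + n + 1)) (y i) (y (i + n + 2)) ≤ K + δ := by
      rcases min_cases (gromovProduct (y (i + n + 1)) (y (i + n)) (y i))
        (gromovProduct (y (i + n + 1)) (y i) (y (i + n + 2))) with ⟨hm, hc⟩ | ⟨hm, hc⟩ <;>
        rw [hm] at h4' <;> linarith
    push_cast
    rw [show i + ((n : ℤ) + 1) = i + n + 1 from by ring,
      show i + (n : ℤ) + 1 + 1 = i + n + 2 from by ring]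
    exact goal2

theorem chain_b (hδ : 0 ≤ δ)
    (h4 : ∀ w x p q : X, min (gromovProduct w x p) (gromovProduct w p q) - δ ≤ gromovProduct w x q)
    (hK : ∀ i : ℤ, gromovProduct (y i) (y (i - 1)) (y (i + 1)) ≤ K)
    (hL : ∀ i : ℤ, L ≤ dist (y i) (y (i + 1)))
    (hLK : 2 * K + 4 * δ + 1 ≤ L)
    (i j : ℤ) (hij : i ≤ j) :
    dist (y i) (y j) + dist (y j) (y (j + 1)) - 2 * (K + δ) ≤ dist (y i) (y (j + 1)) := by
  have h := chain_a δ K L y hδ h4 hK hL hLK (j - i).toNat i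
  rw [show i + ((j - i).toNat : ℤ) = j from by omega] at h
  unfold gromovProduct at h
  linarith

theorem chain_e (hδ : 0 ≤ δ)
    (h4 : ∀ w x p q : X, min (gromovProduct w x p) (gromovProduct w p q) - δ ≤ gromovProduct w x q)
    (hK : ∀ i : ℤ, gromovProduct (y i) (y (i - 1)) (y (i + 1)) ≤ K)
    (hL : ∀ i : ℤ, L ≤ dist (y i) (y (i + 1)))
    (hLK : 2 * K + 4 * δ + 1 ≤ L) :
    ∀ (n : ℕ) (i : ℤ), (n : ℝ) * (L - 2 * (K + δ)) ≤ dist (y i) (y (i + n)) := by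
  intro n
  induction n with
  | zero => intro i; simp
  | succ n ih =>
    intro i
    have h1 := chain_b δ K L y hδ h4 hK hL hLK i (i + n) (by omega)
    have h2 := hL (i + n)
    have h3 := ih i
    push_cast
    rw [show i + ((n : ℤ) + 1) = i + n + 1 from by ring]
    nlinarith [h1, h2, h3]

theorem chain_c0 (hδ : 0 ≤ δ)
    (h4 : ∀ w x p q : X, min (gromovProduct w x p) (gromovProduct w p q) - δ ≤ gromovProduct w x q)
    (hK : ∀ i : ℤ, gromovProduct (y i) (y (i - 1)) (y (i + 1)) ≤ K)
    (hL : ∀ i : ℤ, L ≤ dist (y i) (y (i + 1)))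
    (hLK : 2 * K + 4 * δ + 1 ≤ L)
    (i j : ℤ) (hij : i ≤ j) :
    dist (y i) (y j) - (K + δ) ≤ gromovProduct (y i) (y j) (y (j + 1)) := by
  have h := chain_a δ K L y hδ h4 hK hL hLK (j - i).toNat i
  rw [show i + ((j - i).toNat : ℤ) = j from by omega] at h
  have hid := gp_id (y i) (y j) (y (j + 1))
  linarith

theorem chain_c (hδ : 0 ≤ δ)
    (h4 : ∀ w x p q : X, min (gromovProduct w x p) (gromovProduct w p q) - δ ≤ gromovProduct w x q)
    (hK : ∀ i : ℤ, gromovProduct (y i) (y (i - 1)) (y (i + 1)) ≤ K)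
    (hL : ∀ i : ℤ, L ≤ dist (y i) (y (i + 1)))
    (hLK : 2 * K + 4 * δ + 1 ≤ L) :
    ∀ (n : ℕ) (i j : ℤ), i ≤ j →
      dist (y i) (y j) - (K + 2 * δ) ≤ gromovProduct (y i) (y j) (y (j + n + 1)) := by
  intro n
  induction n with
  | zero =>
    intro i j hij
    have h := chain_c0 δ K L y hδ h4 hK hL hLK i j hij
    push_cast
    rw [add_zero]
    linarith
  | succ n ih =>
    intro i j hij
    have hA := chain_c0 δ K L y hδ h4 hK hL hLK i j hij
    have hB := ih i (j + 1) (by omega)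
    rw [show j + 1 + (n : ℤ) + 1 = j + n + 2 from by ring] at hB
    have hd : dist (y i) (y j) + 2 * δ + 1 ≤ dist (y i) (y (j + 1)) := by
      have h1 := chain_b δ K L y hδ h4 hK hL hLK i j hij
      have h2 := hL j
      linarith
    have h4' := h4 (y i) (y j) (y (j + 1)) (y (j + n + 2))
    push_cast
    rw [show j + ((n : ℤ) + 1) + 1 = j + n + 2 from by ring]
    rcases min_cases (gromovProduct (y i) (y j) (y (j + 1)))
      (gromovProduct (y i) (y (j + 1)) (y (j + n + 2))) with ⟨hm, hc⟩ | ⟨hm, hc⟩ <;>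
      rw [hm] at h4' <;> linarith

theorem chain_d (hδ : 0 ≤ δ)
    (h4 : ∀ w x p q : X, min (gromovProduct w x p) (gromovProduct w p q) - δ ≤ gromovProduct w x q)
    (hK : ∀ i : ℤ, gromovProduct (y i) (y (i - 1)) (y (i + 1)) ≤ K)
    (hL : ∀ i : ℤ, L ≤ dist (y i) (y (i + 1)))
    (hLK : 2 * K + 4 * δ + 1 ≤ L)
    (i j k : ℤ) (hij : i ≤ j) (hjk : j < k) :
    gromovProduct (y j) (y i) (y k) ≤ K + 2 * δ := by
  have h := chain_c δ K L y hδ h4 hK hL hLK (k - j - 1).toNat i j hij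
  rw [show j + ((k - j - 1).toNat : ℤ) + 1 = k from by omega] at h
  have hid := gp_id (y i) (y j) (y k)
  linarith

end Chain

open Filter in
theorem tendsto_pair_iff (F : ℕ × ℕ → ℝ) :
    Tendsto F atTop atTop ↔ ∀ M : ℝ, ∃ N : ℕ, ∀ i j : ℕ, N ≤ i → N ≤ j → M ≤ F (i, j) := by
  rw [tendsto_atTop_atTop]
  constructor
  · intro h M
    obtain ⟨a, ha⟩ := h M
    refine ⟨max a.1 a.2, fun i j hi hj => ha (i, j) ?_⟩
    exact ⟨le_trans (le_max_left _ _) hi, le_trans (le_max_right _ _) hj⟩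
  · intro h M
    obtain ⟨N, hN⟩ := h M
    exact ⟨(N, N), fun p hp => hN p.1 p.2 hp.1 hp.2⟩

theorem seqEquiv_symmX {w : X} {u v : ℕ → X} (h : SeqEquiv w u v) : SeqEquiv w v u := by
  rw [SeqEquiv, tendsto_pair_iff] at h ⊢
  intro M
  obtain ⟨N, hN⟩ := h M
  exact ⟨N, fun i j hi hj => (gp_comm w (v i) (u j)) ▸ hN j i hj hi⟩

theorem seqEquiv_transX (δ : ℝ)
    (h4 : ∀ w x p q : X, min (gromovProduct w x p) (gromovProduct w p q) - δ ≤ gromovProduct w x q)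
    {w : X} {u v z : ℕ → X} (h1 : SeqEquiv w u v) (h2 : SeqEquiv w v z) :
    SeqEquiv w u z := by
  rw [SeqEquiv, tendsto_pair_iff] at h1 h2 ⊢
  intro M
  obtain ⟨N1, hN1⟩ := h1 (M + δ)
  obtain ⟨N2, hN2⟩ := h2 (M + δ)
  refine ⟨max N1 N2, fun i k hi hk => ?_⟩
  have a1 := hN1 i (max N1 N2) (le_trans (le_max_left _ _) hi) (le_max_left _ _)
  have a2 := hN2 (max N1 N2) k (le_max_right _ _) (le_trans (le_max_right _ _) hk)
  have h4' := h4 w (u i) (v (max N1 N2)) (z k)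
  rcases min_cases (gromovProduct w (u i) (v (max N1 N2)))
    (gromovProduct w (v (max N1 N2)) (z k)) with ⟨hm, _⟩ | ⟨hm, _⟩ <;> rw [hm] at h4' <;> linarith

theorem seqEquiv_of_unboundedX (δ : ℝ) (hδ : 0 ≤ δ)
    (h4 : ∀ w x p q : X, min (gromovProduct w x p) (gromovProduct w p q) - δ ≤ gromovProduct w x q)
    {w : X} {u v : ℕ → X} (hu : ConvergesToInfinity w u) (hv : ConvergesToInfinity w v)
    (h : ∀ M : ℝ, ∀ N : ℕ, ∃ n, N ≤ n ∧ M ≤ gromovProduct w (u n) (v n)) :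
    SeqEquiv w u v := by
  rw [ConvergesToInfinity, tendsto_pair_iff] at hu hv
  rw [SeqEquiv, tendsto_pair_iff]
  intro M
  obtain ⟨N1, hN1⟩ := hu (M + 2 * δ)
  obtain ⟨N2, hN2⟩ := hv (M + 2 * δ)
  obtain ⟨n, hn, hgp⟩ := h (M + 2 * δ) (max N1 N2)
  refine ⟨max N1 N2, fun i j hi hj => ?_⟩
  have hn1 : N1 ≤ n := le_trans (le_max_left _ _) hn
  have hn2 : N2 ≤ n := le_trans (le_max_right _ _) hn
  have step1 : M + δ ≤ gromovProduct w (u n) (v j) := by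
    have h4' := h4 w (u n) (v n) (v j)
    have a2 := hN2 n j hn2 (le_trans (le_max_right _ _) hj)
    rcases min_cases (gromovProduct w (u n) (v n)) (gromovProduct w (v n) (v j)) with
      ⟨hm, _⟩ | ⟨hm, _⟩ <;> rw [hm] at h4' <;> linarith
  have h4' := h4 w (u i) (u n) (v j)
  have a1 := hN1 i n (le_trans (le_max_left _ _) hi) hn1
  rcases min_cases (gromovProduct w (u i) (u n)) (gromovProduct w (u n) (v j)) with
    ⟨hm, _⟩ | ⟨hm, _⟩ <;> rw [hm] at h4' <;> linarith

theorem seqEquiv_of_bddX {w : X} {u u' : ℕ → X} (B : ℝ)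
    (hB : ∀ n, dist (u n) (u' n) ≤ B) (hu : ConvergesToInfinity w u) :
    SeqEquiv w u u' := by
  rw [ConvergesToInfinity, tendsto_pair_iff] at hu
  rw [SeqEquiv, tendsto_pair_iff]
  intro M
  obtain ⟨N, hN⟩ := hu (M + B)
  refine ⟨N, fun i j hi hj => ?_⟩
  have hp := gp_perturb w (u i) (u j) (u i) (u' j)
  have := hN i j hi hj
  have := hB j
  simp only [dist_self] at hp
  linarith

theorem convergesToInfinity_of_bddX {w : X} {u u' : ℕ → X} (B : ℝ)
    (hB : ∀ n, dist (u n) (u' n) ≤ B) (hu : ConvergesToInfinity w u) :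
    ConvergesToInfinity w u' := by
  rw [ConvergesToInfinity, tendsto_pair_iff] at hu ⊢
  intro M
  obtain ⟨N, hN⟩ := hu (M + 2 * B)
  refine ⟨N, fun i j hi hj => ?_⟩
  have hp := gp_perturb w (u i) (u j) (u' i) (u' j)
  have := hN i j hi hj
  have := hB i
  have := hB j
  linarith

theorem eqvGen_seqEquiv (δ : ℝ)
    (h4 : ∀ w x p q : X, min (gromovProduct w x p) (gromovProduct w p q) - δ ≤ gromovProduct w x q)
    {w : X} {a b : BoundarySeq w}
    (h : Relation.EqvGen (fun u v : BoundarySeq w => SeqEquiv w u.1 v.1) a b) :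
    SeqEquiv w a.1 b.1 := by
  induction h with
  | rel _ _ hab => exact hab
  | refl x => exact x.2
  | symm _ _ _ ih => exact seqEquiv_symmX ih
  | trans _ _ _ _ _ ih1 ih2 => exact seqEquiv_transX δ h4 ih1 ih2

theorem seqEquiv_of_boundaryPt_eq (δ : ℝ)
    (h4 : ∀ w x p q : X, min (gromovProduct w x p) (gromovProduct w p q) - δ ≤ gromovProduct w x q)
    {w : X} {u v : BoundarySeq w} (h : boundaryPt w u = boundaryPt w v) :
    SeqEquiv w u.1 v.1 :=
  eqvGen_seqEquiv δ h4 (Quot.eqvGen_exact h)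

theorem orbit_product_bound (δ : ℝ) (hδ : 0 ≤ δ)
    (h4 : ∀ w x p q : X, min (gromovProduct w x p) (gromovProduct w p q) - δ ≤ gromovProduct w x q)
    (w : X) (g : X ≃ᵢ X) (t : ℝ) (ht : 0 < t)
    (hg : ∀ m n : ℤ, t * |(m : ℝ) - (n : ℝ)| ≤ dist ((g ^ m) w) ((g ^ n) w)) :
    ∃ (C : ℝ) (Q : ℕ), 1 ≤ Q ∧ ∀ i j : ℕ, Q ≤ i → Q ≤ j →
      gromovProduct w ((g ^ (i : ℤ)) w) ((g ^ (-(j : ℤ))) w) ≤ C := by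
  set p : ℕ → ℝ := fun k => dist w ((g ^ (k : ℤ)) w) with hp
  have hp_lb : ∀ k : ℕ, t * k ≤ p k := by
    intro k
    have h := hg (k : ℤ) 0
    simp only [Int.cast_natCast, Int.cast_zero, sub_zero, zpow_zero] at h
    rw [abs_of_nonneg (by positivity : (0:ℝ) ≤ (k:ℝ))] at h
    simpa [hp, dist_comm] using h
  have hp_sub : ∀ a b : ℕ, p (a + b) ≤ p a + p b := by
    intro a b
    have htri := dist_triangle w ((g ^ (a : ℤ)) w) ((g ^ ((a : ℤ) + (b : ℤ))) w)
    have hz := zpow_dist g (a : ℤ) ((a : ℤ) + (b : ℤ)) w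
    rw [show (a : ℤ) + (b : ℤ) - (a : ℤ) = (b : ℤ) from by ring] at hz
    simp only [hp]
    push_cast
    rw [hz] at htri
    exact htri
  have hp_r : ∀ r : ℕ, p r ≤ r * p 1 := by
    intro r
    induction r with
    | zero => simp [hp]
    | succ r ih =>
      have := hp_sub r 1
      push_cast
      linarith
  obtain ⟨Q₀, hQ₀pos, hQ₀⟩ : ∃ Q₀ : ℕ, 1 ≤ Q₀ ∧ 4 * δ + 1 ≤ 3 * t / 4 * Q₀ := by
    obtain ⟨m, hm⟩ := exists_nat_ge ((4 * δ + 1) / (3 * t / 4))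
    refine ⟨m + 1, by omega, ?_⟩
    have h34 : (0:ℝ) < 3 * t / 4 := by linarith
    have hm1 : (4 * δ + 1) / (3 * t / 4) ≤ ((m + 1 : ℕ) : ℝ) := by push_cast; linarith
    calc 4 * δ + 1 = (4 * δ + 1) / (3 * t / 4) * (3 * t / 4) := by field_simp
      _ ≤ ((m + 1 : ℕ) : ℝ) * (3 * t / 4) := mul_le_mul_of_nonneg_right hm1 h34.le
      _ = 3 * t / 4 * ((m + 1 : ℕ) : ℝ) := by ring
  have hFek : ∃ Q : ℕ, Q₀ ≤ Q ∧ 2 * p Q - p (2 * Q) ≤ t / 4 * Q := by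
    by_contra hcon
    push_neg at hcon
    have hstep : ∀ k : ℕ, p (2 ^ k * Q₀) ≤ 2 ^ k * (p Q₀ - k * (t / 8) * Q₀) := by
      intro k
      induction k with
      | zero => simp
      | succ k ih =>
        have hQle : Q₀ ≤ 2 ^ k * Q₀ := Nat.le_mul_of_pos_left Q₀ (Nat.two_pow_pos k)
        have hc := hcon (2 ^ k * Q₀) hQle
        have hcast : ((2 ^ k * Q₀ : ℕ) : ℝ) = 2 ^ k * (Q₀ : ℝ) := by push_cast; ring
        rw [hcast] at hc
        have hc' : p (2 * (2 ^ k * Q₀)) ≤ 2 * p (2 ^ k * Q₀) - t / 4 * (2 ^ k * (Q₀:ℝ)) :=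
          by linarith
        have hind : (2 ^ (k + 1) * Q₀ : ℕ) = 2 * (2 ^ k * Q₀) := by ring
        rw [hind]
        have e : (2:ℝ) * (2 ^ k * (p Q₀ - k * (t / 8) * Q₀)) - t / 4 * (2 ^ k * (Q₀:ℝ))
            = 2 ^ (k + 1) * (p Q₀ - ((k : ℝ) + 1) * (t / 8) * Q₀) := by ring
        have goal' : p (2 * (2 ^ k * Q₀)) ≤ 2 ^ (k + 1) * (p Q₀ - ((k : ℝ) + 1) * (t / 8) * Q₀) := by
          linarith
        convert goal' using 2
        push_cast
        ring
    obtain ⟨k, hk⟩ := exists_nat_gt ((p Q₀ - t * Q₀) / (t / 8 * Q₀))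
    have hQ0R : (0:ℝ) < (Q₀ : ℝ) := by
      have : (1:ℝ) ≤ (Q₀:ℝ) := by exact_mod_cast hQ₀pos
      linarith
    have hlb := hp_lb (2 ^ k * Q₀)
    have hub := hstep k
    have h2k : (0:ℝ) < 2 ^ k := by positivity
    have hcast : ((2 ^ k * Q₀ : ℕ) : ℝ) = 2 ^ k * (Q₀:ℝ) := by push_cast; ring
    rw [hcast] at hlb
    have hdiv : t * Q₀ ≤ p Q₀ - k * (t / 8) * Q₀ := by
      nlinarith [hlb, hub]
    have : (p Q₀ - t * Q₀) / (t / 8 * Q₀) ≥ k := by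
      rw [ge_iff_le, le_div_iff₀ (by positivity)]
      nlinarith
    linarith
  obtain ⟨Q, hQQ₀, hQdef⟩ := hFek
  have hQ1 : 1 ≤ Q := le_trans hQ₀pos hQQ₀
  have hQR : (1:ℝ) ≤ (Q:ℝ) := by exact_mod_cast hQ1
  set K : ℝ := gromovProduct w ((g ^ (Q : ℤ)) w) ((g ^ (-(Q : ℤ))) w) with hKdef
  have hd2Q : dist ((g ^ (Q : ℤ)) w) ((g ^ (-(Q : ℤ))) w) = p (2 * Q) := by
    rw [zpow_dist g (Q : ℤ) (-(Q : ℤ)) w,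
      show -(Q:ℤ) - (Q:ℤ) = -((2 * Q : ℕ) : ℤ) from by push_cast; ring,
      dist_zpow_neg]
  have hKval : K = (2 * p Q - p (2 * Q)) / 2 := by
    rw [hKdef]
    unfold gromovProduct
    rw [hd2Q, dist_comm ((g ^ (Q:ℤ)) w) w, dist_zpow_neg]
    simp only [hp]
    ring
  have hKbound : K ≤ t / 8 * Q := by rw [hKval]; linarith
  set y : ℤ → X := fun i => (g ^ ((Q : ℤ) * i)) w with hy
  have hyL : ∀ i : ℤ, dist (y i) (y (i + 1)) = p Q := by
    intro i
    simp only [hy]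
    rw [zpow_dist g ((Q:ℤ) * i) ((Q:ℤ) * (i + 1)) w,
      show (Q:ℤ) * (i + 1) - (Q:ℤ) * i = (Q:ℤ) from by ring]
  have hyK : ∀ i : ℤ, gromovProduct (y i) (y (i - 1)) (y (i + 1)) ≤ K := by
    intro i
    have e1 : y (i - 1) = (g ^ ((Q:ℤ) * i)) ((g ^ (-(Q:ℤ))) w) := by
      simp only [hy]
      rw [← zpow_apply_add, show (Q:ℤ) * i + -(Q:ℤ) = (Q:ℤ) * (i - 1) from by ring]
    have e2 : y (i + 1) = (g ^ ((Q:ℤ) * i)) ((g ^ ((Q:ℤ))) w) := by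
      simp only [hy]
      rw [← zpow_apply_add, show (Q:ℤ) * i + (Q:ℤ) = (Q:ℤ) * (i + 1) from by ring]
    have e0 : y i = (g ^ ((Q:ℤ) * i)) w := rfl
    rw [e0, e1, e2, gp_isom3, gp_comm]
  have hLK : 2 * K + 4 * δ + 1 ≤ p Q := by
    have h1 := hp_lb Q
    have h2 : (Q₀:ℝ) ≤ (Q:ℝ) := by exact_mod_cast hQQ₀
    have h3 : 3 * t / 4 * (Q₀:ℝ) ≤ 3 * t / 4 * (Q:ℝ) := by nlinarith
    linarith [hKbound, hQ₀, h1, h3, hQdef]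
  have hyLlow : ∀ i : ℤ, p Q ≤ dist (y i) (y (i + 1)) := fun i => le_of_eq (hyL i).symm
  have hchain := chain_d δ K (p Q) y hδ h4 hyK hyLlow hLK
  refine ⟨K + 2 * δ + 2 * Q * p 1, Q, hQ1, ?_⟩
  intro i j hi hj
  have hQpos : 0 < Q := hQ1
  have hp1 : 0 ≤ p 1 := dist_nonneg
  have hiq : 1 ≤ i / Q := (Nat.one_le_div_iff hQpos).mpr hi
  have hjq : 1 ≤ j / Q := (Nat.one_le_div_iff hQpos).mpr hj
  have d1 : dist ((g ^ (i : ℤ)) w) (y ((i / Q : ℕ) : ℤ)) ≤ Q * p 1 := by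
    have hyq : y ((i / Q : ℕ) : ℤ) = (g ^ ((Q : ℤ) * ((i / Q : ℕ) : ℤ))) w := rfl
    rw [hyq, zpow_dist g (i : ℤ) ((Q:ℤ) * ((i / Q : ℕ) : ℤ)) w]
    have hdm : Q * (i / Q) + i % Q = i := Nat.div_add_mod i Q
    have hdmz : ((Q * (i / Q) : ℕ) : ℤ) + ((i % Q : ℕ) : ℤ) = (i : ℤ) := by exact_mod_cast hdm
    rw [Nat.cast_mul] at hdmz
    have hmod : (Q:ℤ) * ((i / Q : ℕ) : ℤ) - (i : ℤ) = -((i % Q : ℕ) : ℤ) := by linarith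
    rw [hmod, dist_zpow_neg]
    have hrp : dist w ((g ^ ((i % Q : ℕ) : ℤ)) w) = p (i % Q) := rfl
    rw [hrp]
    have hmlt : ((i % Q : ℕ) : ℝ) ≤ (Q : ℝ) := by
      exact_mod_cast le_of_lt (Nat.mod_lt i hQpos)
    calc p (i % Q) ≤ ((i % Q : ℕ) : ℝ) * p 1 := hp_r _
      _ ≤ Q * p 1 := mul_le_mul_of_nonneg_right hmlt hp1
  have d2 : dist ((g ^ (-(j : ℤ))) w) (y (-((j / Q : ℕ) : ℤ))) ≤ Q * p 1 := by
    have hyq : y (-((j / Q : ℕ) : ℤ)) = (g ^ (-((Q : ℤ) * ((j / Q : ℕ) : ℤ)))) w := by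
      simp only [hy]
      rw [show -((Q:ℤ) * ((j / Q : ℕ):ℤ)) = (Q:ℤ) * (-((j / Q : ℕ):ℤ)) from by ring]
    rw [hyq, zpow_dist g (-(j : ℤ)) (-((Q:ℤ) * ((j / Q : ℕ) : ℤ))) w]
    have hdm : Q * (j / Q) + j % Q = j := Nat.div_add_mod j Q
    have hdmz : ((Q * (j / Q) : ℕ) : ℤ) + ((j % Q : ℕ) : ℤ) = (j : ℤ) := by exact_mod_cast hdm
    rw [Nat.cast_mul] at hdmz
    have hmod : -((Q:ℤ) * ((j / Q : ℕ) : ℤ)) - (-(j : ℤ)) = ((j % Q : ℕ) : ℤ) := by linarith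
    rw [hmod]
    have hrp : dist w ((g ^ ((j % Q : ℕ) : ℤ)) w) = p (j % Q) := rfl
    rw [hrp]
    have hmlt : ((j % Q : ℕ) : ℝ) ≤ (Q : ℝ) := by
      exact_mod_cast le_of_lt (Nat.mod_lt j hQpos)
    calc p (j % Q) ≤ ((j % Q : ℕ) : ℝ) * p 1 := hp_r _
      _ ≤ Q * p 1 := mul_le_mul_of_nonneg_right hmlt hp1
  have hcd := hchain (-((j / Q : ℕ) : ℤ)) 0 ((i / Q : ℕ) : ℤ)
    (neg_nonpos.mpr (Int.natCast_nonneg _)) (Int.natCast_pos.mpr hiq)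
  have hy0 : y 0 = w := by
    simp only [hy, mul_zero, zpow_zero, IsometryEquiv.coe_one, id_eq]
  rw [hy0] at hcd
  have hper := gp_perturb w ((g ^ (i:ℤ)) w) ((g ^ (-(j:ℤ))) w)
    (y ((i / Q : ℕ) : ℤ)) (y (-((j / Q : ℕ) : ℤ)))
  have hcomm : gromovProduct w (y ((i / Q : ℕ) : ℤ)) (y (-((j / Q : ℕ) : ℤ)))
      = gromovProduct w (y (-((j / Q : ℕ) : ℤ))) (y ((i / Q : ℕ) : ℤ)) := gp_comm _ _ _
  linarith [hper, hcd, d1, d2, hcomm.le, hcomm.ge]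

theorem dist_zpow_natAbs (h : X ≃ᵢ X) (m k : ℤ) (x : X) :
    dist ((h ^ m) x) ((h ^ k) x) = dist x ((h ^ (((k - m).natAbs : ℕ) : ℤ)) x) := by
  rw [zpow_dist h m k x]
  rcases le_or_gt m k with hmk | hmk
  · conv_lhs => rw [show (k - m : ℤ) = (((k - m).natAbs : ℕ) : ℤ) from by omega]
  · conv_lhs => rw [show (k - m : ℤ) = -((((k - m).natAbs : ℕ)) : ℤ) from by omega]
    rw [dist_zpow_neg]

theorem abs_cast_sub_eq (m k : ℤ) : |(m : ℝ) - (k : ℝ)| = (((k - m).natAbs : ℕ) : ℝ) := by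
  have h1 : ((m:ℝ) - (k:ℝ)) = (((m - k) : ℤ) : ℝ) := by push_cast; ring
  rw [h1, ← Int.cast_abs]
  have h2 : |m - k| = (((k - m).natAbs : ℕ) : ℤ) := by
    rw [Int.abs_eq_natAbs]
    omega
  rw [h2]
  exact Int.cast_natCast _

theorem hyperbolic_of_point (h : X ≃ᵢ X) (x₀ : X) (t : ℝ) (ht : 0 < t)
    (hlow : ∀ m k : ℤ, t * |(m : ℝ) - (k : ℝ)| ≤ dist ((h ^ m) x₀) ((h ^ k) x₀)) :
    IsHyperbolicIsometry h := by
  intro x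
  set R := dist x x₀ with hR
  have hR0 : 0 ≤ R := dist_nonneg
  have key : ∀ m k : ℤ, t * |(m : ℝ) - (k : ℝ)| - 2 * R ≤ dist ((h ^ m) x) ((h ^ k) x) := by
    intro m k
    have e1 : dist ((h ^ m) x) ((h ^ m) x₀) = R := (h ^ m).dist_eq x x₀
    have e2 : dist ((h ^ k) x₀) ((h ^ k) x) = R := by
      rw [(h ^ k).dist_eq x₀ x, dist_comm]
    have htri := dist_triangle4 ((h ^ m) x₀) ((h ^ m) x) ((h ^ k) x) ((h ^ k) x₀)
    rw [dist_comm ((h ^ m) x₀) ((h ^ m) x), dist_comm ((h ^ k) x) ((h ^ k) x₀)] at htri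
    have := hlow m k
    linarith
  have hne : ∀ j : ℤ, j ≠ 0 → 0 < dist x ((h ^ j) x) := by
    intro j hj
    rcases lt_or_eq_of_le (dist_nonneg : 0 ≤ dist x ((h ^ j) x)) with hlt | heq
    · exact hlt
    · exfalso
      have hfix : (h ^ j) x = x := by
        have := dist_eq_zero.mp heq.symm
        exact this.symm
      have hfixn : ∀ s : ℕ, (h ^ (j * s)) x = x := by
        intro s
        induction s with
        | zero => simp
        | succ s ih =>
          push_cast
          rw [show j * ((s : ℤ) + 1) = j * (s : ℤ) + j from by ring, zpow_apply_add, hfix]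
          exact ih
      have hjabs : (1 : ℝ) ≤ |(j : ℝ)| := by
        have h1 : (1 : ℤ) ≤ |j| := by rw [Int.abs_eq_natAbs]; omega
        calc (1:ℝ) ≤ ((|j| : ℤ) : ℝ) := by exact_mod_cast h1
          _ = |(j : ℝ)| := Int.cast_abs
      obtain ⟨s, hs⟩ := exists_nat_gt (2 * R / t)
      have hk := key (j * s) 0
      rw [hfixn s] at hk
      simp only [zpow_zero, IsometryEquiv.coe_one, id_eq, dist_self] at hk
      have habs : |((j * s : ℤ) : ℝ) - ((0 : ℤ) : ℝ)| = |(j:ℝ)| * s := by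
        push_cast
        rw [sub_zero, abs_mul, Nat.abs_cast]
      rw [habs] at hk
      have hs' : (s : ℝ) ≤ |(j:ℝ)| * s := by
        nlinarith [Nat.cast_nonneg (α := ℝ) s]
      have : t * (s:ℝ) ≤ 2 * R := by nlinarith
      have : t * (2 * R / t) < t * s := by
        exact mul_lt_mul_of_pos_left hs ht
      rw [mul_div_cancel₀ _ (ne_of_gt ht)] at this
      linarith
  obtain ⟨M₀', hM₀'⟩ := exists_nat_ge (4 * R / t)
  set M₀ : ℕ := M₀' + 1 with hM₀def
  have hM₀1 : 1 ≤ M₀ := by omega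
  have hM₀R : 4 * R ≤ t * M₀ := by
    have : 4 * R / t ≤ (M₀ : ℝ) := by
      rw [hM₀def]
      push_cast
      linarith
    calc 4 * R = 4 * R / t * t := by field_simp
      _ ≤ (M₀ : ℝ) * t := mul_le_mul_of_nonneg_right this ht.le
      _ = t * M₀ := by ring
  have hIcc : (Finset.Icc 1 M₀).Nonempty := ⟨1, by simp [hM₀1]⟩
  set tx : ℝ := min (t / 2) ((Finset.Icc 1 M₀).inf' hIcc
    (fun j => dist x ((h ^ (j : ℤ)) x) / j)) with htx
  have htxpos : 0 < tx := by
    apply lt_min (by linarith)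
    rw [Finset.lt_inf'_iff]
    intro j hj
    rw [Finset.mem_Icc] at hj
    have hj1 : 1 ≤ j := hj.1
    have : (0:ℝ) < (j:ℝ) := by exact_mod_cast Nat.lt_of_lt_of_le Nat.zero_lt_one hj1
    exact div_pos (hne (j : ℤ) (by exact_mod_cast Nat.one_le_iff_ne_zero.mp hj1)) this
  refine ⟨tx, htxpos, ?_⟩
  intro m k
  have hds : dist ((h ^ m) x) ((h ^ k) x) = dist x ((h ^ ((k - m).natAbs : ℤ)) x) :=
    dist_zpow_natAbs h m k x
  have habs : |(m:ℝ) - (k:ℝ)| = (((k - m).natAbs : ℕ) : ℝ) := abs_cast_sub_eq m k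
  set a : ℕ := (k - m).natAbs with ha
  rw [hds, habs]
  rcases Nat.eq_zero_or_pos a with ha0 | hapos
  · rw [ha0]
    simp
  rcases le_or_gt a M₀ with haM | haM
  · have hmem : a ∈ Finset.Icc 1 M₀ := Finset.mem_Icc.mpr ⟨hapos, haM⟩
    have hinf : tx ≤ dist x ((h ^ (a : ℤ)) x) / a :=
      le_trans (min_le_right _ _) (Finset.inf'_le _ hmem)
    have hAp : (0:ℝ) < (a:ℝ) := by exact_mod_cast hapos
    rw [le_div_iff₀ hAp] at hinf
    linarith
  · have hkey := key m k
    rw [hds, habs] at hkey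
    have htx2 : tx ≤ t / 2 := min_le_left _ _
    have haM' : (M₀ : ℝ) ≤ (a : ℝ) := by exact_mod_cast haM.le
    have hA0 : (0:ℝ) ≤ (a:ℝ) := Nat.cast_nonneg a
    have h2R : 2 * R ≤ t / 2 * a := by
      calc 2 * R = (4 * R) / 2 := by ring
        _ ≤ t * M₀ / 2 := by linarith
        _ ≤ t / 2 * a := by nlinarith
    calc tx * a ≤ t / 2 * a := mul_le_mul_of_nonneg_right htx2 hA0
      _ = t * a - t / 2 * a := by ring
      _ ≤ t * a - 2 * R := by linarith
      _ ≤ dist x ((h ^ (a : ℤ)) x) := by linarith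

theorem boundaryPt_eq_of_seqEquiv {w : X} (u v : BoundarySeq w) (h : SeqEquiv w u.1 v.1) :
    boundaryPt w u = boundaryPt w v := Quot.sound h

set_option maxHeartbeats 1000000 in
/-- If `f` and `g` are dependent hyperbolic isometries of a
`δ`-hyperbolic space (their fixed-point pairs on `∂X` intersect), then there is
`N ≥ 0` such that `f gⁿ` is hyperbolic for all `n ≥ N`. -/
theorem dependent_hyperbolic_comp_power (δ : ℝ) (hX : IsDeltaHyperbolic X δ) (w : X)
    (f g : X ≃ᵢ X) (hf : IsHyperbolicIsometry f) (hg : IsHyperbolicIsometry g)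
    (Aplus Aminus Bplus Bminus : GromovBoundary w)
    (hAp : IsAttractingFixedPt w f Aplus) (hAm : IsRepellingFixedPt w f Aminus)
    (hBp : IsAttractingFixedPt w g Bplus) (hBm : IsRepellingFixedPt w g Bminus)
    (hdep : (({Aplus, Aminus} : Set (GromovBoundary w)) ∩ {Bplus, Bminus}).Nonempty) :
    ∃ N : ℕ, ∀ n : ℕ, N ≤ n → IsHyperbolicIsometry (f * g ^ n) := by
  obtain ⟨t, ht, hgw⟩ := hg w
  have hδ := hX.delta_nonneg
  have h4 := hX.gromov
  obtain ⟨C₂, Q, hQ1, hC₂⟩ := orbit_product_bound δ hδ h4 w g t ht hgw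
  -- the forward and backward orbit sequences based at w
  obtain ⟨xb, hxb, hxbeq⟩ := hBp
  have hdb : ∀ n : ℕ, dist ((g ^ (n:ℤ)) xb) ((g ^ (n:ℤ)) w) ≤ dist xb w :=
    fun n => le_of_eq ((g ^ (n:ℤ)).dist_eq xb w)
  have huPconv : ConvergesToInfinity w (fun n : ℕ => (g ^ (n:ℤ)) w) :=
    convergesToInfinity_of_bddX (dist xb w) hdb hxb
  have hBpw : boundaryPt w ⟨fun n : ℕ => (g ^ (n:ℤ)) w, huPconv⟩ = Bplus := by
    rw [← hxbeq]
    exact (boundaryPt_eq_of_seqEquiv ⟨fun n : ℕ => (g ^ (n:ℤ)) xb, hxb⟩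
      ⟨fun n : ℕ => (g ^ (n:ℤ)) w, huPconv⟩ (seqEquiv_of_bddX (dist xb w) hdb hxb)).symm
  obtain ⟨xm, hxm, hxmeq⟩ := hBm
  have hdm : ∀ n : ℕ, dist (((g⁻¹) ^ (n:ℤ)) xm) ((g ^ (-(n:ℤ))) w) ≤ dist xm w := by
    intro n
    rw [inv_zpow, ← zpow_neg]
    exact le_of_eq ((g ^ (-(n:ℤ))).dist_eq xm w)
  have huMconv : ConvergesToInfinity w (fun n : ℕ => (g ^ (-(n:ℤ))) w) :=
    convergesToInfinity_of_bddX (dist xm w) hdm hxm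
  have hBmw : boundaryPt w ⟨fun n : ℕ => (g ^ (-(n:ℤ))) w, huMconv⟩ = Bminus := by
    rw [← hxmeq]
    exact (boundaryPt_eq_of_seqEquiv ⟨fun n : ℕ => ((g⁻¹) ^ (n:ℤ)) xm, hxm⟩
      ⟨fun n : ℕ => (g ^ (-(n:ℤ))) w, huMconv⟩ (seqEquiv_of_bddX (dist xm w) hdm hxm)).symm
  -- f fixes Aplus and Aminus on the boundary
  obtain ⟨xa, hxa, hxaeq⟩ := hAp
  have hfp1 : boundaryMap w f Aplus = Aplus := by
    rw [← hxaeq]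
    have hcm : ∀ n : ℕ, f ((f ^ (n:ℤ)) xa) = (f ^ (n:ℤ)) (f xa) := by
      intro n
      rw [← IsometryEquiv.mul_apply, ← IsometryEquiv.mul_apply, ← zpow_one_add, ← zpow_add_one,
        show (1 + (n:ℤ)) = (n:ℤ) + 1 from by ring]
    have hb : ∀ n : ℕ, dist (f ((f ^ (n:ℤ)) xa)) ((f ^ (n:ℤ)) xa) ≤ dist (f xa) xa := by
      intro n
      rw [hcm n]
      exact le_of_eq ((f ^ (n:ℤ)).dist_eq (f xa) xa)
    exact boundaryPt_eq_of_seqEquiv ⟨fun n : ℕ => f ((f ^ (n:ℤ)) xa), convergesToInfinity_isometry f hxa⟩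
      ⟨fun n : ℕ => (f ^ (n:ℤ)) xa, hxa⟩
      (seqEquiv_of_bddX (dist (f xa) xa) hb (convergesToInfinity_isometry f hxa))
  obtain ⟨xc, hxc, hxceq⟩ := hAm
  have hfp2 : boundaryMap w f Aminus = Aminus := by
    rw [← hxceq]
    have hcm : ∀ n : ℕ, f (((f⁻¹) ^ (n:ℤ)) xc) = ((f⁻¹) ^ (n:ℤ)) (f xc) := by
      intro n
      rw [inv_zpow, ← zpow_neg, ← IsometryEquiv.mul_apply, ← IsometryEquiv.mul_apply,
        ← zpow_one_add, ← zpow_add_one, show (1 + -(n:ℤ)) = -(n:ℤ) + 1 from by ring]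
    have hb : ∀ n : ℕ, dist (f (((f⁻¹) ^ (n:ℤ)) xc)) (((f⁻¹) ^ (n:ℤ)) xc) ≤ dist (f xc) xc := by
      intro n
      rw [hcm n]
      exact le_of_eq (((f⁻¹) ^ (n:ℤ)).dist_eq (f xc) xc)
    exact boundaryPt_eq_of_seqEquiv ⟨fun n : ℕ => f (((f⁻¹) ^ (n:ℤ)) xc), convergesToInfinity_isometry f hxc⟩
      ⟨fun n : ℕ => ((f⁻¹) ^ (n:ℤ)) xc, hxc⟩
      (seqEquiv_of_bddX (dist (f xc) xc) hb (convergesToInfinity_isometry f hxc))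
  -- injectivity of the boundary map
  have hinj : ∀ a : GromovBoundary w, boundaryMap w f⁻¹ (boundaryMap w f a) = a := by
    intro a
    induction a using Quot.ind with
    | _ u => ?_
    refine boundaryPt_eq_of_seqEquiv ⟨fun n => f⁻¹ (f (u.1 n)),
      convergesToInfinity_isometry f⁻¹ (convergesToInfinity_isometry f u.2)⟩ u ?_
    show SeqEquiv w (fun n => f⁻¹ (f (u.1 n))) u.1
    have he : (fun n : ℕ => f⁻¹ (f (u.1 n))) = u.1 := funext fun n => f.inv_apply_self (u.1 n)
    rw [he]
    exact u.2
  -- boundedness of the Gromov products (h_n w · h_n⁻¹ w)_w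
  have hvMb : ∀ n : ℕ, dist ((g ^ (-(n:ℤ))) w) ((g ^ (-(n:ℤ))) (f⁻¹ w)) ≤ dist w (f⁻¹ w) :=
    fun n => le_of_eq ((g ^ (-(n:ℤ))).dist_eq w (f⁻¹ w))
  have hvMconv : ConvergesToInfinity w (fun n : ℕ => (g ^ (-(n:ℤ))) (f⁻¹ w)) :=
    convergesToInfinity_of_bddX (dist w (f⁻¹ w)) hvMb huMconv
  have hvPconv : ConvergesToInfinity w (fun n : ℕ => f ((g ^ (n:ℤ)) w)) :=
    convergesToInfinity_isometry f huPconv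
  have hMB : ∃ C : ℝ, ∃ N₁ : ℕ, ∀ n : ℕ, N₁ ≤ n →
      gromovProduct w (f ((g ^ (n:ℤ)) w)) ((g ^ (-(n:ℤ))) (f⁻¹ w)) ≤ C := by
    by_contra hcon
    push_neg at hcon
    have hub : ∀ M : ℝ, ∀ N : ℕ, ∃ n, N ≤ n ∧
        M ≤ gromovProduct w (f ((g ^ (n:ℤ)) w)) ((g ^ (-(n:ℤ))) (f⁻¹ w)) := by
      intro M N
      obtain ⟨n, hn1, hn2⟩ := hcon M N
      exact ⟨n, hn1, hn2.le⟩
    have hse : SeqEquiv w (fun n : ℕ => f ((g ^ (n:ℤ)) w)) (fun n : ℕ => (g ^ (-(n:ℤ))) (f⁻¹ w)) :=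
      seqEquiv_of_unboundedX δ hδ h4 hvPconv hvMconv hub
    have hfB : boundaryMap w f Bplus = Bminus := by
      rw [← hBpw, ← hBmw]
      calc boundaryMap w f (boundaryPt w ⟨fun n : ℕ => (g ^ (n:ℤ)) w, huPconv⟩)
          = boundaryPt w ⟨fun n : ℕ => f ((g ^ (n:ℤ)) w), hvPconv⟩ := rfl
        _ = boundaryPt w ⟨fun n : ℕ => (g ^ (-(n:ℤ))) (f⁻¹ w), hvMconv⟩ :=
            boundaryPt_eq_of_seqEquiv _ _ hse
        _ = boundaryPt w ⟨fun n : ℕ => (g ^ (-(n:ℤ))) w, huMconv⟩ :=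
            (boundaryPt_eq_of_seqEquiv ⟨fun n : ℕ => (g ^ (-(n:ℤ))) w, huMconv⟩
              ⟨fun n : ℕ => (g ^ (-(n:ℤ))) (f⁻¹ w), hvMconv⟩
              (seqEquiv_of_bddX (dist w (f⁻¹ w)) hvMb huMconv)).symm
    have hBB : Bplus = Bminus := by
      obtain ⟨P, hP⟩ := hdep
      have hP1 := hP.1
      have hP2 := hP.2
      simp only [Set.mem_insert_iff, Set.mem_singleton_iff] at hP1 hP2
      rcases hP1 with h1 | h1 <;> rcases hP2 with h2 | h2
      · have hAB : Aplus = Bplus := h1.symm.trans h2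
        rw [← hfB, ← hAB, hfp1]
      · have hAB : Aplus = Bminus := h1.symm.trans h2
        have e1 : boundaryMap w f Bplus = boundaryMap w f Aplus := by
          rw [hfB, hfp1, ← hAB]
        have e2 : Bplus = Aplus := by
          have e3 := congrArg (boundaryMap w f⁻¹) e1
          rwa [hinj, hinj] at e3
        rw [e2, hAB]
      · have hAB : Aminus = Bplus := h1.symm.trans h2
        rw [← hfB, ← hAB, hfp2]
      · have hAB : Aminus = Bminus := h1.symm.trans h2
        have e1 : boundaryMap w f Bplus = boundaryMap w f Aminus := by
          rw [hfB, hfp2, ← hAB]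
        have e2 : Bplus = Aminus := by
          have e3 := congrArg (boundaryMap w f⁻¹) e1
          rwa [hinj, hinj] at e3
        rw [e2, hAB]
    have hq : boundaryPt w ⟨fun n : ℕ => (g ^ (n:ℤ)) w, huPconv⟩
        = boundaryPt w ⟨fun n : ℕ => (g ^ (-(n:ℤ))) w, huMconv⟩ := by
      rw [hBpw, hBmw, hBB]
    have hsePM' := seqEquiv_of_boundaryPt_eq δ h4 hq
    have hsePM : SeqEquiv w (fun n : ℕ => (g ^ (n:ℤ)) w) (fun n : ℕ => (g ^ (-(n:ℤ))) w) :=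
      hsePM'
    rw [SeqEquiv, tendsto_pair_iff] at hsePM
    obtain ⟨N, hN⟩ := hsePM (C₂ + 1)
    have hd1 : C₂ + 1 ≤ gromovProduct w ((g ^ ((max N Q : ℕ) : ℤ)) w)
        ((g ^ (-((max N Q : ℕ) : ℤ))) w) := hN (max N Q) (max N Q) (le_max_left _ _) (le_max_left _ _)
    have hd2 := hC₂ (max N Q) (max N Q) (le_max_right _ _) (le_max_right _ _)
    linarith
  obtain ⟨C, N₁, hC⟩ := hMB
  obtain ⟨N₂, hN₂⟩ := exists_nat_ge ((2 * C + 4 * δ + 1 + dist w (f⁻¹ w)) / t)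
  refine ⟨max N₁ N₂, fun n hn => ?_⟩
  have hn1 : N₁ ≤ n := le_trans (le_max_left _ _) hn
  have hn2 : N₂ ≤ n := le_trans (le_max_right _ _) hn
  have hgn : (f * g ^ n : X ≃ᵢ X) w = f ((g ^ (n:ℤ)) w) := by
    rw [IsometryEquiv.mul_apply, zpow_natCast]
  have hgni : (f * g ^ n : X ≃ᵢ X)⁻¹ w = (g ^ (-(n:ℤ))) (f⁻¹ w) := by
    rw [mul_inv_rev, IsometryEquiv.mul_apply, zpow_neg, zpow_natCast]
  -- displacement lower bound
  have hLn : 2 * C + 4 * δ + 1 + dist w (f⁻¹ w) ≤ t * n := by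
    have hcast : (N₂ : ℝ) ≤ (n : ℝ) := by exact_mod_cast hn2
    calc 2 * C + 4 * δ + 1 + dist w (f⁻¹ w)
        = (2 * C + 4 * δ + 1 + dist w (f⁻¹ w)) / t * t := by field_simp
      _ ≤ (N₂ : ℝ) * t := mul_le_mul_of_nonneg_right hN₂ ht.le
      _ ≤ (n : ℝ) * t := mul_le_mul_of_nonneg_right hcast ht.le
      _ = t * n := by ring
  have hlow : t * n ≤ dist w ((g ^ (n:ℤ)) w) := by
    have hk := hgw (n:ℤ) 0
    simp only [Int.cast_natCast, Int.cast_zero, sub_zero, zpow_zero,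
      IsometryEquiv.coe_one, id_eq] at hk
    rw [abs_of_nonneg (by positivity : (0:ℝ) ≤ (n:ℝ))] at hk
    rw [dist_comm] at hk
    exact hk
  have hdisp : 2 * C + 4 * δ + 1 ≤ dist w ((f * g ^ n : X ≃ᵢ X) w) := by
    have e : dist w ((f * g ^ n : X ≃ᵢ X) w) = dist (f⁻¹ w) ((g ^ (n:ℤ)) w) := by
      rw [hgn]
      have e2 := (f⁻¹ : X ≃ᵢ X).dist_eq w (f ((g ^ (n:ℤ)) w))
      rw [f.inv_apply_self] at e2
      exact e2.symm
    have htr := dist_triangle w (f⁻¹ w) ((g ^ (n:ℤ)) w)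
    rw [e]
    linarith
  -- the chain for h = f * gⁿ
  have hgpK : ∀ i : ℤ, gromovProduct (((f * g ^ n) ^ i) w) (((f * g ^ n) ^ (i - 1)) w)
      (((f * g ^ n) ^ (i + 1)) w) ≤ C := by
    intro i
    have e1 : ((f * g ^ n) ^ (i - 1)) w = ((f * g ^ n) ^ i) ((f * g ^ n)⁻¹ w) := by
      rw [show (i - 1 : ℤ) = i + (-1) from by ring, zpow_apply_add, zpow_neg_one]
    have e2 : ((f * g ^ n) ^ (i + 1)) w = ((f * g ^ n) ^ i) ((f * g ^ n) w) := by
      rw [zpow_apply_add, zpow_one]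
    rw [e1, e2, gp_isom3, hgni, hgn, gp_comm]
    exact hC n hn1
  have hLe : ∀ i : ℤ, dist w ((f * g ^ n : X ≃ᵢ X) w)
      ≤ dist (((f * g ^ n) ^ i) w) (((f * g ^ n) ^ (i + 1)) w) := by
    intro i
    rw [zpow_dist, show (i + 1 - i : ℤ) = 1 from by ring, zpow_one]
  have hchain := chain_e δ C (dist w ((f * g ^ n : X ≃ᵢ X) w))
    (fun i : ℤ => ((f * g ^ n) ^ i) w) hδ h4 hgpK hLe hdisp
  have ht' : 0 < dist w ((f * g ^ n : X ≃ᵢ X) w) - 2 * (C + δ) := by linarith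
  apply hyperbolic_of_point (f * g ^ n) w _ ht'
  intro m k
  rw [dist_zpow_natAbs, abs_cast_sub_eq m k]
  have hch := hchain ((k - m).natAbs) 0
  have hz0 : ((f * g ^ n) ^ (0:ℤ)) w = w := by
    rw [zpow_zero]
    rfl
  rw [hz0, zero_add] at hch
  calc (dist w ((f * g ^ n : X ≃ᵢ X) w) - 2 * (C + δ)) * (((k - m).natAbs : ℕ) : ℝ)
      = (((k - m).natAbs : ℕ) : ℝ) * (dist w ((f * g ^ n : X ≃ᵢ X) w) - 2 * (C + δ)) := by ring
    _ ≤ dist w (((f * g ^ n) ^ (((k - m).natAbs : ℕ) : ℤ)) w) := hch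
end
end
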